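/- arXiv:1711.09338 — 9 statements merged into one kernel-verified Lean document; each statement's English description precedes it below -/
import Mathlib

section
/- For T ~ IWL(φ,λ) with φ > r (r a positive integer), the r-th moment equals E[T^r] = λ^r (φ+λ−r) / ((λ+φ)(φ−1)(φ−2)⋯(φ−r)). -/
open MeasureTheory
open Set

/-- Density of the inverse weighted Lindley (IWL) distribution. -/
noncomputable def iwl (φ lam t : ℝ) : ℝ :=
  lam ^ (φ + 1) / ((φ + lam) * Real.Gamma φ) * t ^ (-φ - 1) * (1 + 1 / t) *
    Real.exp (-lam / t)

lemma gamma_prod (φ : ℝ) (r : ℕ) (h : (r : ℝ) < φ) :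
    Real.Gamma φ = (∏ k ∈ Finset.range r, (φ - (k + 1))) * Real.Gamma (φ - r) := by
  induction r with
  | zero => simp
  | succ n ih =>
    have hn : (n : ℝ) < φ := by push_cast at h ⊢; linarith
    rw [ih hn, Finset.prod_range_succ]
    have hx : φ - (n + 1 : ℕ) ≠ 0 := by push_cast at h ⊢; intro h0; linarith
    have h2 : Real.Gamma (φ - n) = (φ - (n + 1 : ℕ)) * Real.Gamma (φ - (n + 1 : ℕ)) := by
      have := Real.Gamma_add_one hx
      rw [show φ - (n + 1 : ℕ) + 1 = φ - n by push_cast; ring] at this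
      rw [this]
    rw [h2]; push_cast; ring

lemma intOn (s lam : ℝ) (hs : -1 < s) (hlam : 0 < lam) :
    IntegrableOn (fun y : ℝ => y ^ s * Real.exp (-(lam * y))) (Ioi 0) := by
  have := integrableOn_rpow_mul_exp_neg_mul_rpow hs (zero_lt_one' ℝ) hlam
  refine this.congr_fun (fun x hx => ?_) measurableSet_Ioi
  simp only [Real.rpow_one]; ring_nf

/-- The r-th moment of the IWL distribution, for `φ > r`. -/
theorem iwl_moment (φ lam : ℝ) (r : ℕ) (hr : 1 ≤ r) (hφ : (r : ℝ) < φ)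
    (hlam : 0 < lam) :
    ∫ t in Set.Ioi (0 : ℝ), t ^ r * iwl φ lam t =
      lam ^ r * (φ + lam - r) /
        ((lam + φ) * ∏ k ∈ Finset.range r, (φ - (k + 1))) := by
  have hrpos : (0:ℝ) < r := by exact_mod_cast hr
  set s : ℝ := φ - r with hsdef
  have hs : 0 < s := by simp only [hsdef, sub_pos]; exact hφ
  set g : ℝ → ℝ := fun y => y ^ (s - 1) * (1 + y) * Real.exp (-(lam * y)) with hg
  have key := integral_comp_rpow_Ioi g (p := (-1 : ℝ)) (by norm_num)
  have step1 : ∫ t in Set.Ioi (0 : ℝ), t ^ r * iwl φ lam t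
      = (lam ^ (φ + 1) / ((φ + lam) * Real.Gamma φ)) *
          ∫ x in Ioi (0:ℝ), (|(-1:ℝ)| * x ^ ((-1:ℝ) - 1)) • g (x ^ (-1:ℝ)) := by
    rw [← integral_const_mul]
    refine setIntegral_congr_fun measurableSet_Ioi (fun t ht => ?_)
    have ht : (0:ℝ) < t := ht
    simp only [iwl, hg, smul_eq_mul, abs_neg, abs_one, one_mul, Real.rpow_neg_one]
    rw [Real.inv_rpow ht.le, ← Real.rpow_neg ht.le]
    rw [show (-lam / t) = -(lam * t⁻¹) by field_simp, one_div]
    rw [show (t:ℝ) ^ r = t ^ (r:ℝ) by rw [Real.rpow_natCast]]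
    have e2 : t ^ ((r:ℝ)) * t ^ (-φ - 1) = t ^ ((-1:ℝ) - 1) * t ^ (-(s-1)) := by
      rw [← Real.rpow_add ht, ← Real.rpow_add ht, hsdef]; ring_nf
    linear_combination (lam ^ (φ+1) / ((φ + lam) * Real.Gamma φ) * (1 + t⁻¹) *
      Real.exp (-(lam * t⁻¹))) * e2
  rw [step1, key]
  have split : ∫ y in Ioi (0:ℝ), g y
      = (∫ y in Ioi (0:ℝ), y ^ (s - 1) * Real.exp (-(lam * y)))
        + ∫ y in Ioi (0:ℝ), y ^ ((s + 1) - 1) * Real.exp (-(lam * y)) := by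
    rw [← integral_add (intOn (s-1) lam (by linarith) hlam) (intOn (s+1-1) lam (by linarith) hlam)]
    refine setIntegral_congr_fun measurableSet_Ioi (fun y hy => ?_)
    have hy : (0:ℝ) < y := hy
    simp only [hg]
    rw [show s + 1 - 1 = (s - 1) + 1 by ring, Real.rpow_add hy, Real.rpow_one]
    ring
  rw [split, Real.integral_rpow_mul_exp_neg_mul_Ioi hs hlam,
    Real.integral_rpow_mul_exp_neg_mul_Ioi (by linarith : (0:ℝ) < s + 1) hlam]
  rw [Real.Gamma_add_one hs.ne']
  have hΓφ : Real.Gamma φ = (∏ k ∈ Finset.range r, (φ - (k + 1))) * Real.Gamma s := by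
    rw [hsdef]; exact gamma_prod φ r hφ
  have hP : (∏ k ∈ Finset.range r, (φ - (k + 1))) ≠ 0 := by
    refine Finset.prod_ne_zero_iff.mpr (fun k hk => ?_)
    have : (k:ℝ) + 1 ≤ r := by
      have := Finset.mem_range.mp hk; exact_mod_cast Nat.succ_le_of_lt this
    intro h0; nlinarith
  have hΓs : Real.Gamma s ≠ 0 := (Real.Gamma_pos_of_pos hs).ne'
  have hφlam : φ + lam ≠ 0 := by
    have : (0:ℝ) < φ + lam := by linarith
    exact this.ne'
  have hl1 : lam ^ (φ + 1) * (1 / lam) ^ s = lam ^ r * lam := by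
    rw [one_div, Real.inv_rpow hlam.le, ← Real.rpow_neg hlam.le, ← Real.rpow_add hlam,
      show φ + 1 + -s = (r:ℝ) + 1 by rw [hsdef]; ring, Real.rpow_add hlam, Real.rpow_one,
      Real.rpow_natCast]
  have hl2 : lam ^ (φ + 1) * (1 / lam) ^ (s + 1) = lam ^ r := by
    rw [one_div, Real.inv_rpow hlam.le, ← Real.rpow_neg hlam.le, ← Real.rpow_add hlam,
      show φ + 1 + -(s + 1) = (r:ℝ) by rw [hsdef]; ring, Real.rpow_natCast]
  have expand : lam ^ (φ + 1) / ((φ + lam) * Real.Gamma φ) *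
        ((1 / lam) ^ s * Real.Gamma s + (1 / lam) ^ (s + 1) * (s * Real.Gamma s))
      = (lam ^ (φ + 1) * (1 / lam) ^ s * Real.Gamma s
          + lam ^ (φ + 1) * (1 / lam) ^ (s + 1) * (s * Real.Gamma s))
        / ((φ + lam) * ((∏ k ∈ Finset.range r, (φ - (k + 1))) * Real.Gamma s)) := by
    rw [hΓφ]; ring
  rw [expand, hl1, hl2, hsdef]
  rw [div_eq_div_iff (by exact mul_ne_zero hφlam (mul_ne_zero hP hΓs))
    (by exact mul_ne_zero (by rwa [add_comm]) hP)]
  ring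
end

section
/- For T ~ IWL(φ,λ) with φ > 1, the mean is E[T] = λ(φ+λ−1) / ((λ+φ)(φ−1)). -/
open MeasureTheory
open Real Set

/-- The mean of the IWL distribution, for `φ > 1`. -/
theorem iwl_mean (φ lam : ℝ) (hφ : 1 < φ) (hlam : 0 < lam) :
    ∫ t in Set.Ioi (0 : ℝ), t * iwl φ lam t =
      lam * (φ + lam - 1) / ((lam + φ) * (φ - 1)) := by
  set C : ℝ := lam ^ (φ + 1) / ((φ + lam) * Real.Gamma φ) with hC
  have key : ∫ t in Set.Ioi (0 : ℝ), t * iwl φ lam t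
      = ∫ x in Ioi (0:ℝ), (C * (x ^ (φ - 2) * Real.exp (-(lam * x)))
          + C * (x ^ (φ - 1) * Real.exp (-(lam * x)))) := by
    rw [← integral_comp_rpow_Ioi (fun y => y * iwl φ lam y) (p := -1) (by norm_num)]
    refine setIntegral_congr_fun measurableSet_Ioi (fun x hx => ?_)
    have hx : (0:ℝ) < x := hx
    have hX : (0:ℝ) < x ^ φ := rpow_pos_of_pos hx φ
    have e5 : x ^ (-1:ℝ) = x⁻¹ := rpow_neg_one x
    have e4 : x ^ ((-1:ℝ) - 1) = (x * x)⁻¹ := by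
      rw [show (-1:ℝ) - 1 = -(1+1) by ring, Real.rpow_neg hx.le, Real.rpow_add hx,
        Real.rpow_one]
    have e1 : (x⁻¹ : ℝ) ^ (-φ - 1) = x ^ φ * x := by
      rw [show -φ - 1 = -(φ+1) by ring, Real.rpow_neg (inv_nonneg.2 hx.le),
        Real.inv_rpow hx.le, inv_inv, Real.rpow_add hx, Real.rpow_one]
    have e2 : x ^ (φ - 2) = x ^ φ / (x * x) := by
      rw [show φ - 2 = φ + -(1+1) by ring, Real.rpow_add hx, Real.rpow_neg hx.le,
        Real.rpow_add hx, Real.rpow_one, div_eq_mul_inv]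
    have e3 : x ^ (φ - 1) = x ^ φ / x := by
      rw [Real.rpow_sub hx, Real.rpow_one]
    have earg : -lam / x⁻¹ = -(lam * x) := by field_simp
    simp only [smul_eq_mul, iwl, e5, e1, e2, e3, e4, earg, ← hC]
    field_simp
    ring
  rw [key]
  have hG1 : (0:ℝ) < Real.Gamma (φ - 1) := Real.Gamma_pos_of_pos (by linarith)
  have hGφ : Real.Gamma φ = (φ - 1) * Real.Gamma (φ - 1) := by
    have h := Real.Gamma_add_one (s := φ - 1) (by intro h; linarith [sub_eq_zero.mp h])
    rw [show φ - 1 + 1 = φ by ring] at h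
    exact h
  have i1 : IntegrableOn (fun x : ℝ => x ^ (φ - 2) * Real.exp (-(lam * x))) (Ioi 0) := by
    have := integrableOn_rpow_mul_exp_neg_mul_rpow (p := 1) (s := φ - 2) (b := lam)
      (by linarith) zero_lt_one hlam
    simpa [Real.rpow_one] using this
  have i2 : IntegrableOn (fun x : ℝ => x ^ (φ - 1) * Real.exp (-(lam * x))) (Ioi 0) := by
    have := integrableOn_rpow_mul_exp_neg_mul_rpow (p := 1) (s := φ - 1) (b := lam)
      (by linarith) zero_lt_one hlam
    simpa [Real.rpow_one] using this
  rw [integral_add (i1.const_mul C) (i2.const_mul C), integral_const_mul, integral_const_mul,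
    show φ - 2 = (φ - 1) - 1 by ring, integral_rpow_mul_exp_neg_mul_Ioi (by linarith) hlam,
    show φ - 1 = φ - 1 by rfl]
  rw [show (fun x : ℝ => x ^ (φ - 1) * Real.exp (-(lam * x))) = fun x : ℝ => x ^ (φ - 1) * Real.exp (-(lam * x)) from rfl]
  rw [integral_rpow_mul_exp_neg_mul_Ioi (by linarith : (0:ℝ) < φ) hlam]
  have hlp : lam ^ (φ + 1) = lam ^ (φ - 1) * lam * lam := by
    rw [show φ + 1 = (φ - 1) + 1 + 1 by ring, Real.rpow_add hlam, Real.rpow_add hlam,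
      Real.rpow_one]
  have hone : (1 / lam) ^ (φ - 1) = (lam ^ (φ - 1))⁻¹ := by
    rw [one_div, Real.inv_rpow hlam.le]
  have honeφ : (1 / lam) ^ φ = (lam ^ (φ - 1))⁻¹ * lam⁻¹ := by
    rw [one_div, Real.inv_rpow hlam.le, show φ = (φ - 1) + 1 by ring, Real.rpow_add hlam,
      Real.rpow_one, mul_inv]
    norm_num
  have hl1 : lam ^ (φ - 1) ≠ 0 := (rpow_pos_of_pos hlam _).ne'
  have hd : (φ + lam) ≠ 0 := by positivity
  rw [hC, hGφ, hlp, hone, honeφ]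
  generalize Real.Gamma (φ - 1) = G at hG1 ⊢
  generalize lam ^ (φ - 1) = L at hl1 ⊢
  have h1 : φ - 1 ≠ 0 := by intro h; linarith [sub_eq_zero.mp h]
  field_simp
  ring
end

section
/- For T ~ IWL(φ,λ), the cumulative distribution function is F(t) = (Γ(φ, λ/t)(λ+φ) + (λ/t)^φ e^(−λ/t)) / ((λ+φ)Γ(φ)) for t > 0, where Γ(φ,x) = ∫ₓ^∞ w^(φ−1) e^(−w) dw is the upper incomplete gamma function. -/
open MeasureTheory

/-- Upper incomplete gamma function `Γ(a,x) = ∫ₓ^∞ w^(a−1) e^(−w) dw`. -/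
noncomputable def upperGamma (a x : ℝ) : ℝ :=
  ∫ w in Set.Ioi x, w ^ (a - 1) * Real.exp (-w)

/-- The cumulative distribution function of the IWL distribution. -/
theorem iwl_cdf (φ lam : ℝ) (hφ : 0 < φ) (hlam : 0 < lam) :
    ∀ t : ℝ, 0 < t →
      ∫ s in Set.Ioo (0 : ℝ) t, iwl φ lam s =
        (upperGamma φ (lam / t) * (lam + φ) +
            (lam / t) ^ φ * Real.exp (-lam / t)) /
          ((lam + φ) * Real.Gamma φ) := by
  intro t ht
  set x : ℝ := lam / t with hxdef
  have hx0 : 0 < x := div_pos hlam ht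
  have hΓ : 0 < Real.Gamma φ := Real.Gamma_pos_of_pos hφ
  -- integrability of w ^ a * exp (-w) on Ioi x for exponents φ-1 and φ
  have hint : ∀ a : ℝ, 0 < a →
      IntegrableOn (fun w : ℝ => w ^ (a - 1) * Real.exp (-w)) (Set.Ioi x) := by
    intro a ha
    have h := (Real.GammaIntegral_convergent ha).mono_set
      (Set.Ioi_subset_Ioi hx0.le)
    exact h.congr_fun (fun w _ => mul_comm _ _) measurableSet_Ioi
  have int1 : IntegrableOn (fun w : ℝ => w ^ (φ - 1) * Real.exp (-w)) (Set.Ioi x) :=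
    hint φ hφ
  have int2 : IntegrableOn (fun w : ℝ => w ^ φ * Real.exp (-w)) (Set.Ioi x) := by
    have := hint (φ + 1) (by linarith)
    simpa using this
  have int3 : IntegrableOn
      (fun w : ℝ => (w ^ φ - φ * w ^ (φ - 1)) * Real.exp (-w)) (Set.Ioi x) := by
    have : (fun w : ℝ => (w ^ φ - φ * w ^ (φ - 1)) * Real.exp (-w)) =
        fun w : ℝ => w ^ φ * Real.exp (-w) - φ * (w ^ (φ - 1) * Real.exp (-w)) := by
      funext w; ring
    rw [this]
    exact int2.sub (int1.const_mul φ)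
  -- FTC at infinity: ∫ (w^φ - φ w^(φ-1)) e^{-w} = x^φ e^{-x}
  have keyB : ∫ w in Set.Ioi x, (w ^ φ - φ * w ^ (φ - 1)) * Real.exp (-w) =
      x ^ φ * Real.exp (-x) := by
    have hderiv : ∀ w ∈ Set.Ici x, HasDerivAt (fun w : ℝ => -(w ^ φ * Real.exp (-w)))
        ((w ^ φ - φ * w ^ (φ - 1)) * Real.exp (-w)) w := by
      intro w hw
      have hw0 : w ≠ 0 := (lt_of_lt_of_le hx0 hw).ne'
      have h1 : HasDerivAt (fun w : ℝ => w ^ φ) (φ * w ^ (φ - 1)) w := by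
        simpa [mul_comm] using Real.hasDerivAt_rpow_const (Or.inl hw0)
      have h2 : HasDerivAt (fun w : ℝ => Real.exp (-w)) (-Real.exp (-w)) w := by
        simpa using (hasDerivAt_neg w).exp
      have := (h1.mul h2).neg
      exact this.congr_deriv (by ring)
    have htend : Filter.Tendsto (fun w : ℝ => -(w ^ φ * Real.exp (-w)))
        Filter.atTop (nhds 0) := by
      have := (tendsto_rpow_mul_exp_neg_mul_atTop_nhds_zero φ 1 one_pos).neg
      simpa using this
    have := integral_Ioi_of_hasDerivAt_of_tendsto' hderiv int3 htend
    rw [this]; ring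
  -- change of variables s = lam / w
  have himg : (fun w : ℝ => lam / w) '' Set.Ioi x = Set.Ioo 0 t := by
    ext s
    constructor
    · rintro ⟨w, hw, rfl⟩
      have hw0 : 0 < w := lt_trans hx0 hw
      constructor
      · exact div_pos hlam hw0
      · rw [div_lt_iff₀ hw0]
        calc lam = x * t := by rw [hxdef]; field_simp
        _ < t * w := by rw [mul_comm]; exact (mul_lt_mul_iff_right₀ ht).2 hw
    · rintro ⟨hs0, hst⟩
      refine ⟨lam / s, ?_, by field_simp⟩
      rw [hxdef]
      exact div_lt_div_of_pos_left hlam hs0 hst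
  have hcov : ∫ s in Set.Ioo (0 : ℝ) t, iwl φ lam s =
      ∫ w in Set.Ioi x, |(-(lam / w ^ 2))| • iwl φ lam (lam / w) := by
    rw [← himg]
    apply integral_image_eq_integral_abs_deriv_smul measurableSet_Ioi
    · intro w hw
      have hw0 : w ≠ 0 := (lt_trans hx0 hw).ne'
      have : HasDerivAt (fun w : ℝ => lam / w) (-(lam / w ^ 2)) w := by
        have := (hasDerivAt_inv hw0).const_mul lam
        simpa [div_eq_mul_inv, mul_comm, neg_div] using this
      exact this.hasDerivWithinAt
    · intro w1 h1 w2 h2 h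
      have hw1 : (0:ℝ) < w1 := lt_trans hx0 h1
      have hw2 : (0:ℝ) < w2 := lt_trans hx0 h2
      field_simp at h
      exact h.symm
  rw [hcov]
  -- pointwise simplification of the integrand
  have hpt : ∀ w ∈ Set.Ioi x, |(-(lam / w ^ 2))| • iwl φ lam (lam / w) =
      ((lam + φ) * (w ^ (φ - 1) * Real.exp (-w)) +
        (w ^ φ - φ * w ^ (φ - 1)) * Real.exp (-w)) / ((lam + φ) * Real.Gamma φ) := by
    intro w hw
    have hw0 : 0 < w := lt_trans hx0 hw
    have habs : |(-(lam / w ^ 2))| = lam / w ^ 2 := by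
      rw [abs_neg, abs_of_nonneg (by positivity)]
    have hexp : -lam / (lam / w) = -w := by field_simp [mul_comm]
    have hlw : (lam / w) ^ (-φ - 1) = lam ^ (-φ - 1) * w ^ (φ + 1) := by
      rw [Real.div_rpow hlam.le hw0.le]
      rw [show (-φ - 1 : ℝ) = -(φ + 1) by ring]
      rw [Real.rpow_neg hw0.le, div_inv_eq_mul]
    have hlam1 : lam ^ (φ + 1) * lam ^ (-φ - 1) = 1 := by
      rw [← Real.rpow_add hlam]; norm_num
    have hw1 : w ^ (φ + 1) = w ^ (φ - 1) * w ^ 2 := by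
      rw [← Real.rpow_natCast w 2, ← Real.rpow_add hw0]
      congr 1; push_cast; ring
    have hwφ : w ^ φ = w ^ (φ - 1) * w := by
      conv_lhs => rw [show φ = (φ - 1) + 1 by ring]
      rw [Real.rpow_add hw0, Real.rpow_one]
    rw [smul_eq_mul, habs, iwl, hexp, hlw]
    have h1w : 1 + 1 / (lam / w) = (lam + w) / lam := by field_simp
    rw [h1w]
    rw [div_mul_eq_mul_div, div_mul_eq_mul_div, div_mul_eq_mul_div]
    rw [show lam ^ (φ + 1) * (lam ^ (-φ - 1) * w ^ (φ + 1)) =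
      (lam ^ (φ + 1) * lam ^ (-φ - 1)) * w ^ (φ + 1) by ring, hlam1, one_mul]
    rw [hw1, hwφ]
    have hD : (φ + lam) * Real.Gamma φ ≠ 0 := by positivity
    have hD' : (lam + φ) * Real.Gamma φ ≠ 0 := by positivity
    field_simp
    ring
  rw [setIntegral_congr_fun measurableSet_Ioi hpt]
  rw [integral_div]
  rw [integral_add ((int1.const_mul _)) int3]
  rw [integral_const_mul, keyB]
  have hug : upperGamma φ x = ∫ w in Set.Ioi x, w ^ (φ - 1) * Real.exp (-w) := rfl
  rw [← hug]
  have : Real.exp (-lam / t) = Real.exp (-x) := by rw [hxdef, neg_div]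
  rw [this]
  ring
end

section
/- For T ~ IWL(φ,λ), the survival function is S(t) = (γ(φ, λ/t)(λ+φ) − (λ/t)^φ e^(−λ/t)) / ((λ+φ)Γ(φ)) for t > 0, where γ(φ,x) = ∫₀^x w^(φ−1) e^(−w) dw is the lower incomplete gamma function. -/
open MeasureTheory

/-- Lower incomplete gamma function `γ(a,x) = ∫₀^x w^(a−1) e^(−w) dw`. -/
noncomputable def lowerGamma (a x : ℝ) : ℝ :=
  ∫ w in Set.Ioo (0 : ℝ) x, w ^ (a - 1) * Real.exp (-w)

open Real Set Filter

lemma g_contOn (φ : ℝ) :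
    ContinuousOn (fun w : ℝ => w ^ (φ - 1) * Real.exp (-w)) (Set.Ioi 0) :=
  (continuousOn_id.rpow_const fun _ hw => Or.inl (ne_of_gt hw)).mul
    ((Real.continuous_exp.comp continuous_neg).continuousOn)

lemma g_integrableOn {φ : ℝ} (hφ : 0 < φ) (x : ℝ) :
    IntegrableOn (fun w : ℝ => w ^ (φ - 1) * Real.exp (-w)) (Set.Ioc 0 x) := by
  have h : IntegrableOn (fun w : ℝ => Real.exp (-w) * w ^ (φ - 1)) (Set.Ioc 0 x) :=
    (Real.GammaIntegral_convergent hφ).mono_set Set.Ioc_subset_Ioi_self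
  exact h.congr_fun (fun w _ => mul_comm _ _) measurableSet_Ioc

lemma lowerGamma_eq (φ : ℝ) {x : ℝ} (hx : 0 ≤ x) :
    lowerGamma φ x = ∫ w in (0:ℝ)..x, w ^ (φ - 1) * Real.exp (-w) := by
  rw [intervalIntegral.integral_of_le hx, lowerGamma,
    MeasureTheory.integral_Ioc_eq_integral_Ioo]

lemma hasDerivAt_lowerGamma {φ : ℝ} (hφ : 0 < φ) {x : ℝ} (hx : 0 < x) :
    HasDerivAt (lowerGamma φ) (x ^ (φ - 1) * Real.exp (-x)) x := by
  set g : ℝ → ℝ := fun w => w ^ (φ - 1) * Real.exp (-w) with hg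
  have hint : IntervalIntegrable g volume 0 x := by
    rw [intervalIntegrable_iff_integrableOn_Ioc_of_le hx.le]
    exact g_integrableOn hφ x
  have hc : ContinuousAt g x := by
    exact ((Real.continuousAt_rpow_const x _ (Or.inl hx.ne')).mul
      ((Real.continuous_exp.comp continuous_neg).continuousAt))
  have hD := intervalIntegral.integral_hasDerivAt_right hint
    ((g_contOn φ).stronglyMeasurableAtFilter isOpen_Ioi x hx) hc
  refine hD.congr_of_eventuallyEq ?_
  filter_upwards [eventually_gt_nhds hx] with u hu
  exact (lowerGamma_eq φ hu.le)

lemma lowerGamma_nonneg {φ x : ℝ} : 0 ≤ lowerGamma φ x := by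
  refine MeasureTheory.setIntegral_nonneg measurableSet_Ioo (fun w hw => ?_)
  exact mul_nonneg (Real.rpow_nonneg hw.1.le _) (Real.exp_nonneg _)

lemma lowerGamma_le {φ : ℝ} (hφ : 0 < φ) {x : ℝ} (hx : 0 ≤ x) :
    lowerGamma φ x ≤ x ^ φ / φ := by
  have h1 : lowerGamma φ x ≤ ∫ w in Set.Ioo (0:ℝ) x, w ^ (φ - 1) := by
    refine MeasureTheory.setIntegral_mono_on
      (((g_integrableOn hφ x)).mono_set Set.Ioo_subset_Ioc_self) ?_ measurableSet_Ioo
      (fun w hw => ?_)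
    · have h0 : IntervalIntegrable (fun w : ℝ => w ^ (φ - 1)) volume 0 x :=
        intervalIntegral.intervalIntegrable_rpow' (by linarith)
      rw [intervalIntegrable_iff_integrableOn_Ioc_of_le hx] at h0
      exact h0.mono_set Set.Ioo_subset_Ioc_self
    · calc w ^ (φ - 1) * Real.exp (-w) ≤ w ^ (φ - 1) * 1 := by
            refine mul_le_mul_of_nonneg_left ?_ (Real.rpow_nonneg hw.1.le _)
            exact Real.exp_le_one_iff.mpr (by linarith [hw.1.le])
        _ = w ^ (φ - 1) := mul_one _
  have h2 : ∫ w in Set.Ioo (0:ℝ) x, w ^ (φ - 1) = x ^ φ / φ := by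
    rw [← MeasureTheory.integral_Ioc_eq_integral_Ioo,
      ← intervalIntegral.integral_of_le hx,
      integral_rpow (Or.inl (by linarith))]
    rw [Real.zero_rpow (by linarith : φ - 1 + 1 ≠ 0)]
    ring_nf
  linarith [h1, h2 ▸ h1]

/-- The survival function of the IWL distribution. -/
theorem iwl_survival (φ lam : ℝ) (hφ : 0 < φ) (hlam : 0 < lam) :
    ∀ t : ℝ, 0 < t →
      ∫ s in Set.Ioi t, iwl φ lam s =
        (lowerGamma φ (lam / t) * (lam + φ) -
            (lam / t) ^ φ * Real.exp (-lam / t)) /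
          ((lam + φ) * Real.Gamma φ) := by
  intro t ht
  have hΓ : 0 < Real.Gamma φ := Real.Gamma_pos_of_pos hφ
  have hlφ : 0 < lam + φ := by linarith
  set F : ℝ → ℝ := fun u => -((lowerGamma φ (lam / u) * (lam + φ) -
      (lam / u) ^ φ * Real.exp (-lam / u)) / ((lam + φ) * Real.Gamma φ)) with hF
  have hderiv : ∀ s : ℝ, 0 < s → HasDerivAt F (iwl φ lam s) s := by
    intro s hs
    have hx : 0 < lam / s := div_pos hlam hs
    have h1 : HasDerivAt (fun u : ℝ => lam / u) (-(lam / s ^ 2)) s := by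
      have := (hasDerivAt_inv hs.ne').const_mul lam
      simpa [div_eq_mul_inv, mul_comm, mul_assoc] using this
    have h2 : HasDerivAt (fun u : ℝ => lowerGamma φ (lam / u))
        ((lam / s) ^ (φ - 1) * Real.exp (-(lam / s)) * -(lam / s ^ 2)) s :=
      (hasDerivAt_lowerGamma hφ hx).comp s h1
    have h3 : HasDerivAt (fun u : ℝ => (lam / u) ^ φ)
        (φ * (lam / s) ^ (φ - 1) * -(lam / s ^ 2)) s :=
      (Real.hasDerivAt_rpow_const (Or.inl hx.ne')).comp s h1
    have h4 : HasDerivAt (fun u : ℝ => Real.exp (-lam / u))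
        (Real.exp (-(lam / s)) * -(-(lam / s ^ 2))) s := by
      have := (Real.hasDerivAt_exp (-(lam / s))).comp s h1.neg
      simpa [neg_div, Function.comp_def, Pi.neg_apply] using this
    have h5 := ((h2.mul_const (lam + φ)).sub (h3.mul h4)).div_const
      ((lam + φ) * Real.Gamma φ)
    have h6 := h5.neg
    convert h6 using 1
    · rfl
    · rfl
    · rfl
    have hxφ : (lam / s) ^ (φ - 1) = lam ^ φ / lam * (s ^ φ)⁻¹ * s := by
      rw [Real.div_rpow hlam.le hs.le, Real.rpow_sub_one hlam.ne', Real.rpow_sub_one hs.ne']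
      field_simp
    have hxφ' : (lam / s) ^ φ = lam ^ φ * (s ^ φ)⁻¹ := by
      rw [Real.div_rpow hlam.le hs.le, div_eq_mul_inv]
    have hlφ1 : lam ^ (φ + 1) = lam ^ φ * lam := Real.rpow_add_one hlam.ne' φ
    have hsφ1 : s ^ (-φ - 1) = (s ^ φ)⁻¹ / s := by
      rw [Real.rpow_sub hs, Real.rpow_neg hs.le, Real.rpow_one]
    have hsp : (0:ℝ) < s ^ φ := Real.rpow_pos_of_pos hs _
    have hlp : (0:ℝ) < lam ^ φ := Real.rpow_pos_of_pos hlam _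
    rw [iwl, hlφ1, hsφ1, hxφ, hxφ']
    have hns : -lam / s = -(lam / s) := neg_div _ _
    rw [hns]
    field_simp
    ring
  have hcont : ContinuousWithinAt F (Set.Ici t) t :=
    ((hderiv t ht).continuousAt).continuousWithinAt
  have hxt : Tendsto (fun u : ℝ => lam / u) atTop (nhds 0) :=
    tendsto_const_nhds.div_atTop tendsto_id
  have hpow : Tendsto (fun u : ℝ => (lam / u) ^ φ) atTop (nhds 0) := by
    have hc : ContinuousAt (fun y : ℝ => y ^ φ) 0 :=
      Real.continuousAt_rpow_const 0 φ (Or.inr hφ.le)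
    have := hc.tendsto.comp hxt
    simpa [Real.zero_rpow hφ.ne', Function.comp_def] using this
  have hγ : Tendsto (fun u : ℝ => lowerGamma φ (lam / u)) atTop (nhds 0) := by
    apply squeeze_zero' (f := fun u => lowerGamma φ (lam / u))
      (g := fun u => (lam / u) ^ φ / φ)
    · filter_upwards with u using lowerGamma_nonneg
    · filter_upwards [eventually_gt_atTop 0] with u hu
      exact lowerGamma_le hφ (div_nonneg hlam.le hu.le)
    · have := hpow.div_const φ
      simpa using this
  have hexp : Tendsto (fun u : ℝ => Real.exp (-lam / u)) atTop (nhds 1) := by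
    have : Tendsto (fun u : ℝ => -lam / u) atTop (nhds 0) := by
      have := hxt.neg
      simpa [neg_div] using this
    simpa [Function.comp_def] using (Real.continuous_exp.continuousAt.tendsto.comp this)
  have hlim : Tendsto F atTop (nhds 0) := by
    have : Tendsto (fun u => (lowerGamma φ (lam / u) * (lam + φ) -
        (lam / u) ^ φ * Real.exp (-lam / u)) / ((lam + φ) * Real.Gamma φ))
        atTop (nhds ((0 * (lam + φ) - 0 * 1) / ((lam + φ) * Real.Gamma φ))) :=
      (((hγ.mul_const _).sub (hpow.mul hexp)).div_const _)
    have h0 := this.neg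
    simpa using h0
  have hpos : ∀ s ∈ Set.Ioi t, 0 ≤ iwl φ lam s := by
    intro s hs
    have hs0 : 0 < s := lt_trans ht hs
    unfold iwl
    positivity
  have := integral_Ioi_of_hasDerivAt_of_nonneg hcont
    (fun s hs => hderiv s (lt_trans ht hs)) hpos hlim
  rw [this]
  simp only [hF]
  ring
end

section
/- For T ~ IWL(φ,λ) with φ > 0 and λ > 0, E[1/T] = (φ+1)/λ − 1/(λ+φ) = φ(λ+φ+1)/(λ(λ+φ)). -/
open MeasureTheory

open Real Set in
lemma iwl_aux_integrable {a r : ℝ} (ha : 0 < a) (hr : 0 < r) :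
    IntegrableOn (fun x : ℝ => x ^ (a - 1) * Real.exp (-(r * x))) (Ioi 0) := by
  have h := Real.GammaIntegral_convergent ha
  have h2 := (integrableOn_Ioi_comp_mul_left_iff
      (fun x : ℝ => Real.exp (-x) * x ^ (a - 1)) 0 hr).2 (by simpa using h)
  have h3 : IntegrableOn (fun x : ℝ => r ^ (1 - a) * (Real.exp (-(r * x)) * (r * x) ^ (a - 1)))
      (Ioi 0) := h2.const_mul (r ^ (1 - a))
  refine IntegrableOn.congr_fun h3 (fun x hx => ?_) measurableSet_Ioi
  have hx0 : (0:ℝ) < x := hx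
  rw [mul_rpow hr.le hx0.le]
  rw [show r ^ (1 - a) * (Real.exp (-(r * x)) * (r ^ (a - 1) * x ^ (a - 1)))
      = (r ^ (1 - a) * r ^ (a - 1)) * (x ^ (a - 1) * Real.exp (-(r * x))) by ring]
  rw [← Real.rpow_add hr]
  norm_num

open Real Set in
lemma iwl_aux_integral {a r : ℝ} (ha : 0 < a) (hr : 0 < r) :
    ∫ x in Ioi (0:ℝ), x ^ a * (1 + x) * Real.exp (-(r * x))
      = (1 / r) ^ (a + 1) * Real.Gamma (a + 1) + (1 / r) ^ (a + 2) * Real.Gamma (a + 2) := by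
  have h1 : IntegrableOn (fun x : ℝ => x ^ a * Real.exp (-(r * x))) (Ioi 0) := by
    have := iwl_aux_integrable (by linarith : (0:ℝ) < a + 1) hr
    rwa [show a + 1 - 1 = a by ring] at this
  have h2 : IntegrableOn (fun x : ℝ => x ^ (a + 1) * Real.exp (-(r * x))) (Ioi 0) := by
    have := iwl_aux_integrable (by linarith : (0:ℝ) < a + 2) hr
    rwa [show a + 2 - 1 = a + 1 by ring] at this
  have key : ∫ x in Ioi (0:ℝ), x ^ a * (1 + x) * Real.exp (-(r * x))
      = ∫ x in Ioi (0:ℝ), (x ^ a * Real.exp (-(r * x)) + x ^ (a + 1) * Real.exp (-(r * x))) := by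
    refine setIntegral_congr_fun measurableSet_Ioi (fun x hx => ?_)
    have hx0 : (0:ℝ) < x := hx
    rw [Real.rpow_add_one hx0.ne']
    ring
  rw [key, integral_add h1 h2]
  have e1 : ∫ x in Ioi (0:ℝ), x ^ a * Real.exp (-(r * x))
      = (1 / r) ^ (a + 1) * Real.Gamma (a + 1) := by
    have := integral_rpow_mul_exp_neg_mul_Ioi (by linarith : (0:ℝ) < a + 1) hr
    simpa using this
  have e2 : ∫ x in Ioi (0:ℝ), x ^ (a + 1) * Real.exp (-(r * x))
      = (1 / r) ^ (a + 2) * Real.Gamma (a + 2) := by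
    have := integral_rpow_mul_exp_neg_mul_Ioi (by linarith : (0:ℝ) < a + 2) hr
    rw [show a + 2 - 1 = a + 1 by ring] at this
    simpa using this
  rw [e1, e2]

/-- `E[1/T] = (φ+1)/λ − 1/(λ+φ) = φ(λ+φ+1)/(λ(λ+φ))` for `T ~ IWL(φ,λ)`. -/
theorem iwl_inv_moment (φ lam : ℝ) (hφ : 0 < φ) (hlam : 0 < lam) :
    (∫ t in Set.Ioi (0 : ℝ), (1 / t) * iwl φ lam t =
        (φ + 1) / lam - 1 / (lam + φ)) ∧
      (φ + 1) / lam - 1 / (lam + φ) = φ * (lam + φ + 1) / (lam * (lam + φ)) := by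
  have hφlam : (0:ℝ) < φ + lam := by linarith
  have hΓ : (0:ℝ) < Real.Gamma φ := Real.Gamma_pos_of_pos hφ
  set C : ℝ := lam ^ (φ + 1) / ((φ + lam) * Real.Gamma φ) with hC
  set g : ℝ → ℝ := fun y => C * (y ^ φ * (1 + y) * Real.exp (-(lam * y))) with hg
  constructor
  · have step1 : ∫ t in Set.Ioi (0 : ℝ), (1 / t) * iwl φ lam t
        = ∫ t in Set.Ioi (0 : ℝ), (|(-1:ℝ)| * t ^ ((-1:ℝ) - 1)) • g (t ^ (-1:ℝ)) := by
      refine setIntegral_congr_fun measurableSet_Ioi (fun t ht => ?_)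
      have ht0 : (0:ℝ) < t := ht
      have hrn1 : t ^ (-1:ℝ) = t⁻¹ := Real.rpow_neg_one t
      have hinv : (t⁻¹ : ℝ) ^ φ = t ^ (-φ) := by
        rw [Real.inv_rpow ht0.le, Real.rpow_neg ht0.le]
      simp only [smul_eq_mul, hg, hrn1, hinv, iwl]
      have h2 : |(-1:ℝ)| * t ^ ((-1:ℝ) - 1) = t ^ (-2:ℝ) := by norm_num
      rw [h2]
      have h3 : t ^ (-2:ℝ) * (C * (t ^ (-φ) * (1 + t⁻¹) * Real.exp (-(lam * t⁻¹))))
          = C * ((t ^ (-2:ℝ) * t ^ (-φ)) * (1 + t⁻¹) * Real.exp (-(lam * t⁻¹))) := by ring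
      rw [h3, ← Real.rpow_add ht0]
      have h4 : -(lam * t⁻¹) = -lam / t := by field_simp
      have h5 : (-2:ℝ) + -φ = -φ - 1 + -1 := by ring
      rw [h4, h5, Real.rpow_add ht0, Real.rpow_neg_one]
      have : (1:ℝ) / t = t⁻¹ := one_div t
      rw [this]
      ring
    rw [step1, MeasureTheory.integral_comp_rpow_Ioi g (by norm_num : (-1:ℝ) ≠ 0)]
    have step2 : ∫ y in Set.Ioi (0:ℝ), g y
        = C * ((1 / lam) ^ (φ + 1) * Real.Gamma (φ + 1)
            + (1 / lam) ^ (φ + 2) * Real.Gamma (φ + 2)) := by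
      rw [hg, integral_const_mul, iwl_aux_integral hφ hlam]
    rw [step2]
    -- algebra
    have hΓ1 : Real.Gamma (φ + 1) = φ * Real.Gamma φ := Real.Gamma_add_one hφ.ne'
    have hΓ2 : Real.Gamma (φ + 2) = (φ + 1) * (φ * Real.Gamma φ) := by
      rw [show φ + 2 = (φ + 1) + 1 by ring, Real.Gamma_add_one (by linarith), hΓ1]
    have hp1 : lam ^ (φ + 1) * (1 / lam) ^ (φ + 1) = 1 := by
      rw [← Real.mul_rpow hlam.le (by positivity), mul_one_div, div_self hlam.ne',
        Real.one_rpow]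
    have hp2 : lam ^ (φ + 1) * (1 / lam) ^ (φ + 2) = 1 / lam := by
      have e : (1 / lam : ℝ) ^ (φ + 2) = (1 / lam) ^ (φ + 1) * (1 / lam) := by
        rw [show φ + 2 = (φ + 1) + 1 by ring,
          Real.rpow_add_one (by positivity : (0:ℝ) < 1 / lam).ne']
      rw [e, ← mul_assoc, hp1, one_mul]
    have hne1 : lam ≠ 0 := hlam.ne'
    have hne2 : Real.Gamma φ ≠ 0 := hΓ.ne'
    have hne3 : φ + lam ≠ 0 := hφlam.ne'
    have hne4 : lam + φ ≠ 0 := by intro h; apply hne3; linarith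
    rw [hC, hΓ1, hΓ2, div_mul_eq_mul_div, mul_add,
      show lam ^ (φ + 1) * ((1 / lam) ^ (φ + 1) * (φ * Real.Gamma φ))
        = lam ^ (φ + 1) * (1 / lam) ^ (φ + 1) * (φ * Real.Gamma φ) from (mul_assoc _ _ _).symm,
      show lam ^ (φ + 1) * ((1 / lam) ^ (φ + 2) * ((φ + 1) * (φ * Real.Gamma φ)))
        = lam ^ (φ + 1) * (1 / lam) ^ (φ + 2) * ((φ + 1) * (φ * Real.Gamma φ))
        from (mul_assoc _ _ _).symm, hp1, hp2]
    field_simp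
    ring
  · field_simp
    ring
end

section
/- For T ~ IWL(φ,λ), E[log T] = log λ − 1/(λ+φ) − ψ(φ), where ψ is the digamma function. -/
open MeasureTheory

/-- The digamma function `ψ = (log Γ)'`. -/
noncomputable def digamma (x : ℝ) : ℝ :=
  deriv (fun y => Real.log (Real.Gamma y)) x

set_option maxHeartbeats 1000000 in
open MeasureTheory Set Filter Asymptotics in
lemma gammaLog_aux {s : ℝ} (hs : 0 < s) :
    IntegrableOn (fun t : ℝ => Real.log t * (t ^ (s - 1) * Real.exp (-t))) (Set.Ioi 0) ∧
      HasDerivAt Real.Gamma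
        (∫ t in Set.Ioi (0:ℝ), Real.log t * (t ^ (s - 1) * Real.exp (-t))) s := by
  have hs' : 0 < (s : ℂ).re := by simpa using hs
  set r : ℝ → ℝ := fun t => Real.log t * (t ^ (s - 1) * Real.exp (-t)) with hr
  -- integrability of the complex integrand, via the Mellin machinery
  have hmc : MellinConvergent (fun t : ℝ => Real.log t • ((Real.exp (-t) : ℝ) : ℂ)) (s : ℂ) := by
    refine (mellin_hasDerivAt_of_isBigO_rpow (E := ℂ) (a := (s:ℂ).re + 1) (b := 0)
      ?_ ?_ (lt_add_one _) ?_ hs').1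
    · refine (Continuous.continuousOn ?_).locallyIntegrableOn measurableSet_Ioi
      exact Complex.continuous_ofReal.comp (Real.continuous_exp.comp continuous_neg)
    · rw [← isBigO_norm_left]
      simp_rw [Complex.norm_real, isBigO_norm_left]
      simpa only [neg_one_mul] using
        (isLittleO_exp_neg_mul_rpow_atTop zero_lt_one _).isBigO
    · simp_rw [neg_zero, Real.rpow_zero]
      refine isBigO_const_of_tendsto (?_ : Tendsto _ _ (nhds (1 : ℂ))) one_ne_zero
      rw [(by simp : (1 : ℂ) = Real.exp (-0))]
      exact (Complex.continuous_ofReal.comp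
        (Real.continuous_exp.comp continuous_neg)).continuousWithinAt
  have haeq : ∀ t ∈ Ioi (0:ℝ),
      (t : ℂ) ^ ((s:ℂ) - 1) • (Real.log t • ((Real.exp (-t) : ℝ) : ℂ)) = ((r t : ℝ) : ℂ) := by
    intro t ht
    have h1 : ((t ^ (s - 1) : ℝ) : ℂ) = (t : ℂ) ^ ((s:ℂ) - 1) := by
      rw [Complex.ofReal_cpow (le_of_lt ht)]
      push_cast
      ring_nf
    rw [smul_eq_mul, Complex.real_smul, ← h1, hr]
    push_cast
    ring
  have hIc : IntegrableOn (fun t : ℝ => ((r t : ℝ) : ℂ)) (Ioi 0) := by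
    have h0 : IntegrableOn (fun t : ℝ => (t : ℂ) ^ ((s:ℂ) - 1) •
        (Real.log t • ((Real.exp (-t) : ℝ) : ℂ))) (Ioi 0) := hmc
    exact h0.congr_fun haeq measurableSet_Ioi
  have hIr : IntegrableOn r (Ioi 0) := by
    exact (by simpa using hIc.re : Integrable (fun x => r x) (volume.restrict (Ioi 0)))
  refine ⟨hIr, ?_⟩
  have hD := Complex.hasDerivAt_GammaIntegral hs'
  have hval : (∫ t in Ioi (0:ℝ), (t : ℂ) ^ ((s:ℂ) - 1) * (Real.log t * Real.exp (-t)))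
      = ((∫ t in Ioi (0:ℝ), r t : ℝ) : ℂ) := by
    rw [show (∫ t in Ioi (0:ℝ), (t : ℂ) ^ ((s:ℂ) - 1) * (Real.log t * Real.exp (-t)))
        = ∫ t in Ioi (0:ℝ), ((r t : ℝ) : ℂ) from
      setIntegral_congr_fun measurableSet_Ioi fun t ht => by
        simpa [smul_eq_mul, Complex.real_smul] using haeq t ht]
    exact integral_ofReal
  rw [hval] at hD
  have hR := hD.real_of_complex
  simp only [Complex.ofReal_re] at hR
  refine hR.congr_of_eventuallyEq ?_
  filter_upwards [isOpen_Ioi.mem_nhds hs] with x hx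
  rw [← Complex.Gamma_eq_integral (by simpa using (hx : (0:ℝ) < x)), Complex.Gamma_ofReal,
    Complex.ofReal_re]

lemma gamma_diffAt {s : ℝ} (hs : 0 < s) : DifferentiableAt ℝ Real.Gamma s :=
  Real.differentiableAt_Gamma fun m =>
    (((neg_nonpos.mpr (Nat.cast_nonneg m)).trans_lt hs).ne')

lemma digamma_eq {s : ℝ} (hs : 0 < s) :
    digamma s = deriv Real.Gamma s / Real.Gamma s := by
  have h := ((gamma_diffAt hs).hasDerivAt.log (Real.Gamma_pos_of_pos hs).ne').deriv
  simpa [digamma] using h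

lemma deriv_gamma_add_one {s : ℝ} (hs : 0 < s) :
    deriv Real.Gamma (s + 1) = Real.Gamma s + s * deriv Real.Gamma s := by
  have h1 : HasDerivAt (fun x : ℝ => Real.Gamma (x + 1)) (deriv Real.Gamma (s + 1)) s := by
    simpa [Function.comp_def] using (HasDerivAt.comp s (gamma_diffAt (by linarith : (0:ℝ) < s + 1)).hasDerivAt
      ((hasDerivAt_id' s).add_const 1))
  have h2 : HasDerivAt (fun x : ℝ => x * Real.Gamma x)
      (Real.Gamma s + s * deriv Real.Gamma s) s := by
    have h2' := (hasDerivAt_id' s).mul (gamma_diffAt hs).hasDerivAt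
    rw [one_mul] at h2'
    exact h2'
  have heq : (fun x : ℝ => x * Real.Gamma x) =ᶠ[nhds s] fun x : ℝ => Real.Gamma (x + 1) := by
    filter_upwards [isOpen_Ioi.mem_nhds hs] with x hx
    rw [Real.Gamma_add_one (ne_of_gt hx)]
  exact (h2.congr_of_eventuallyEq heq.symm).unique h1 |>.symm

/-- `E[log T] = log λ − 1/(λ+φ) − ψ(φ)` for `T ~ IWL(φ,λ)`. -/
theorem iwl_log_moment (φ lam : ℝ) (hφ : 0 < φ) (hlam : 0 < lam) :
    ∫ t in Set.Ioi (0 : ℝ), Real.log t * iwl φ lam t =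
      Real.log lam - 1 / (lam + φ) - digamma φ := by
  have hΓ : 0 < Real.Gamma φ := Real.Gamma_pos_of_pos hφ
  have hφ1 : 0 < φ + 1 := by linarith
  set F : ℝ → ℝ := fun t => Real.log t * iwl φ lam t with hF
  set g : ℝ → ℝ := fun x => (|(-1:ℝ)| * x ^ ((-1:ℝ) - 1)) * F (x ^ (-1:ℝ)) with hg
  set h : ℝ → ℝ := fun u => ((φ + lam) * Real.Gamma φ)⁻¹ *
    ((Real.log lam - Real.log u) * ((lam + u) * (u ^ (φ - 1) * Real.exp (-u)))) with hh
  have h1 : ∫ x in Set.Ioi (0:ℝ), g x = ∫ t in Set.Ioi (0:ℝ), F t := by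
    simpa [hg, smul_eq_mul] using integral_comp_rpow_Ioi F (p := -1) (by norm_num)
  have h2 : ∫ x in Set.Ioi (0:ℝ), g (lam⁻¹ * x) = lam • ∫ x in Set.Ioi (0:ℝ), g x := by
    simpa using integral_comp_mul_left_Ioi g 0 (inv_pos.mpr hlam)
  have key : Set.EqOn (fun u => g (lam⁻¹ * u)) (fun u => lam * h u) (Set.Ioi 0) := by
    intro u hu
    have hu0 : (0:ℝ) < u := hu
    have hx : (0:ℝ) < lam⁻¹ * u := by positivity
    have hL : (0:ℝ) < lam ^ (φ + 1) := Real.rpow_pos_of_pos hlam _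
    have hlu : (0:ℝ) < lam / u := by positivity
    have e1 : (lam⁻¹ * u) ^ ((-1:ℝ)) = lam / u := by
      rw [Real.rpow_neg hx.le, Real.rpow_one, mul_inv, inv_inv]
      field_simp
    have e2 : (lam⁻¹ * u) ^ ((-1:ℝ) - 1) = lam ^ 2 / u ^ 2 := by
      rw [show ((-1:ℝ) - 1) = -((2:ℕ):ℝ) by norm_num, Real.rpow_neg hx.le,
        Real.rpow_natCast]
      field_simp
    have e3 : (lam / u) ^ (-φ - 1) = (u ^ (φ - 1) * u ^ 2) / lam ^ (φ + 1) := by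
      rw [show -φ - 1 = -(φ + 1) by ring, Real.rpow_neg hlu.le,
        Real.div_rpow hlam.le hu0.le, inv_div]
      congr 1
      rw [show φ + 1 = (φ - 1) + ((2:ℕ):ℝ) by push_cast; ring, Real.rpow_add hu0,
        Real.rpow_natCast]
    have e4 : -lam / (lam / u) = -u := by field_simp
    have e5 : 1 + 1 / (lam / u) = (lam + u) / lam := by
      rw [one_div, inv_div]
      field_simp
    have e6 : Real.log (lam / u) = Real.log lam - Real.log u :=
      Real.log_div hlam.ne' hu0.ne'
    simp only [hg, hF, iwl, e1, e2, e3, e4, e5, e6, hh, abs_neg, abs_one, one_mul]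
    field_simp
  have h3 : ∫ x in Set.Ioi (0:ℝ), g (lam⁻¹ * x) = lam * ∫ u in Set.Ioi (0:ℝ), h u := by
    rw [setIntegral_congr_fun measurableSet_Ioi key, integral_const_mul]
  have h4 : ∫ t in Set.Ioi (0:ℝ), F t = ∫ u in Set.Ioi (0:ℝ), h u := by
    rw [← h1]
    have h5 := h2
    rw [h3, smul_eq_mul] at h5
    exact (mul_left_cancel₀ hlam.ne' h5).symm
  -- the four basic integrals
  have intA : IntegrableOn (fun u : ℝ => u ^ (φ - 1) * Real.exp (-u)) (Set.Ioi 0) :=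
    (Real.GammaIntegral_convergent hφ).congr_fun (fun x _ => mul_comm _ _) measurableSet_Ioi
  have intB : IntegrableOn (fun u : ℝ => u ^ φ * Real.exp (-u)) (Set.Ioi 0) :=
    (Real.GammaIntegral_convergent hφ1).congr_fun
      (fun x _ => by rw [add_sub_cancel_right, mul_comm]) measurableSet_Ioi
  have intLA : IntegrableOn (fun u : ℝ => Real.log u * (u ^ (φ - 1) * Real.exp (-u)))
      (Set.Ioi 0) := (gammaLog_aux hφ).1
  have intLB : IntegrableOn (fun u : ℝ => Real.log u * (u ^ φ * Real.exp (-u)))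
      (Set.Ioi 0) := by
    have := (gammaLog_aux hφ1).1
    refine this.congr_fun (fun x _ => by rw [add_sub_cancel_right]) measurableSet_Ioi
  have vA : ∫ u in Set.Ioi (0:ℝ), u ^ (φ - 1) * Real.exp (-u) = Real.Gamma φ := by
    rw [Real.Gamma_eq_integral hφ]
    exact setIntegral_congr_fun measurableSet_Ioi fun x _ => mul_comm _ _
  have vB : ∫ u in Set.Ioi (0:ℝ), u ^ φ * Real.exp (-u) = Real.Gamma (φ + 1) := by
    rw [Real.Gamma_eq_integral hφ1]
    exact setIntegral_congr_fun measurableSet_Ioi fun x _ => by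
      rw [add_sub_cancel_right, mul_comm]
  have vLA : ∫ u in Set.Ioi (0:ℝ), Real.log u * (u ^ (φ - 1) * Real.exp (-u)) =
      deriv Real.Gamma φ := ((gammaLog_aux hφ).2.deriv).symm
  have vLB : ∫ u in Set.Ioi (0:ℝ), Real.log u * (u ^ φ * Real.exp (-u)) =
      deriv Real.Gamma (φ + 1) := by
    calc ∫ u in Set.Ioi (0:ℝ), Real.log u * (u ^ φ * Real.exp (-u))
        = ∫ u in Set.Ioi (0:ℝ), Real.log u * (u ^ (φ + 1 - 1) * Real.exp (-u)) :=
          setIntegral_congr_fun measurableSet_Ioi fun x _ => by rw [add_sub_cancel_right]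
      _ = deriv Real.Gamma (φ + 1) := ((gammaLog_aux hφ1).2.deriv).symm
  -- expand h
  have hexp : Set.EqOn h (fun u => ((φ + lam) * Real.Gamma φ)⁻¹ *
      (Real.log lam * (lam * (u ^ (φ - 1) * Real.exp (-u)) + u ^ φ * Real.exp (-u)) -
        (lam * (Real.log u * (u ^ (φ - 1) * Real.exp (-u))) +
          Real.log u * (u ^ φ * Real.exp (-u))))) (Set.Ioi 0) := by
    intro u hu
    have hu0 : (0:ℝ) < u := hu
    have hpow : u ^ φ = u ^ (φ - 1) * u := by
      have := Real.rpow_add_one hu0.ne' (φ - 1)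
      rwa [sub_add_cancel] at this
    simp only [hh, hpow]
    ring
  have h6 : ∫ u in Set.Ioi (0:ℝ), h u = ((φ + lam) * Real.Gamma φ)⁻¹ *
      (Real.log lam * (lam * Real.Gamma φ + Real.Gamma (φ + 1)) -
        (lam * deriv Real.Gamma φ + deriv Real.Gamma (φ + 1))) := by
    have intA' : IntegrableOn (fun u : ℝ => lam * (u ^ (φ - 1) * Real.exp (-u)))
        (Set.Ioi 0) := intA.const_mul lam
    have intLA' : IntegrableOn (fun u : ℝ => lam * (Real.log u * (u ^ (φ - 1) * Real.exp (-u))))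
        (Set.Ioi 0) := intLA.const_mul lam
    have int1 : IntegrableOn (fun u : ℝ => Real.log lam *
        (lam * (u ^ (φ - 1) * Real.exp (-u)) + u ^ φ * Real.exp (-u))) (Set.Ioi 0) :=
      (intA'.add intB).const_mul (Real.log lam)
    have int2 : IntegrableOn (fun u : ℝ => lam * (Real.log u * (u ^ (φ - 1) * Real.exp (-u))) +
        Real.log u * (u ^ φ * Real.exp (-u))) (Set.Ioi 0) := intLA'.add intLB
    rw [setIntegral_congr_fun measurableSet_Ioi hexp]
    rw [integral_const_mul, integral_sub int1 int2,
      integral_const_mul, integral_add intA' intB,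
      integral_add intLA' intLB, integral_const_mul, integral_const_mul,
      vA, vB, vLA, vLB]
  rw [show (∫ t in Set.Ioi (0:ℝ), Real.log t * iwl φ lam t) = ∫ t in Set.Ioi (0:ℝ), F t from rfl,
    h4, h6, Real.Gamma_add_one hφ.ne', deriv_gamma_add_one hφ, digamma_eq hφ]
  have hne : (φ + lam) * Real.Gamma φ ≠ 0 := by positivity
  field_simp
  ring
end

section
/- For all φ > 0 and λ > 0, the function η(t) = (φ+2)/t − 1/(t+1) − λ/t² on (0,∞) has an upside-down bathtub (unimodal) shape: there exists ξ > 0 such that η is increasing on (0,ξ) and decreasing on (ξ,∞). -/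
open Set

/-- For all `φ > 0`, `λ > 0`, the function `η(t) = (φ+2)/t − 1/(t+1) − λ/t²`
on `(0,∞)` is unimodal (upside-down bathtub shaped): there is a `ξ > 0` such
that `η` is increasing on `(0,ξ)` and decreasing on `(ξ,∞)`. -/
theorem eta_upside_down_bathtub (φ lam : ℝ) (hφ : 0 < φ) (hlam : 0 < lam) :
    ∃ ξ : ℝ, 0 < ξ ∧
      StrictMonoOn (fun t : ℝ => (φ + 2) / t - 1 / (t + 1) - lam / t ^ 2)
        (Set.Ioo 0 ξ) ∧
      StrictAntiOn (fun t : ℝ => (φ + 2) / t - 1 / (t + 1) - lam / t ^ 2)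
        (Set.Ioi ξ) := by
  set f : ℝ → ℝ := fun t => (φ + 2) / t - 1 / (t + 1) - lam / t ^ 2 with hfdef
  set u : ℝ → ℝ := fun t => t ^ 3 / (t + 1) ^ 2 - (φ + 2) * t + 2 * lam with hudef
  -- derivative of f for t > 0
  have hfd : ∀ t : ℝ, 0 < t → HasDerivAt f (u t / t ^ 3) t := by
    intro t ht
    have ht0 : t ≠ 0 := ne_of_gt ht
    have ht1' : (0:ℝ) < t + 1 := by linarith
    have ht1 : t + 1 ≠ 0 := ne_of_gt ht1'
    have h1 : HasDerivAt (fun t : ℝ => (φ + 2) / t)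
        ((0 * t - (φ + 2) * 1) / t ^ 2) t :=
      (hasDerivAt_const t (φ + 2)).div (hasDerivAt_id t) ht0
    have h2 : HasDerivAt (fun t : ℝ => 1 / (t + 1))
        ((0 * (t + 1) - 1 * 1) / (t + 1) ^ 2) t :=
      (hasDerivAt_const t (1 : ℝ)).div ((hasDerivAt_id t).add_const 1) ht1
    have h3 : HasDerivAt (fun t : ℝ => lam / t ^ 2)
        ((0 * t ^ 2 - lam * (↑2 * t ^ 1)) / (t ^ 2) ^ 2) t :=
      (hasDerivAt_const t lam).div (hasDerivAt_pow 2 t) (pow_ne_zero 2 ht0)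
    have h := (h1.sub h2).sub h3
    refine h.congr_deriv ?_
    rw [hudef]
    field_simp [ht0, ht1]
    ring
  -- derivative of u for t > 0
  have hud : ∀ t : ℝ, 0 < t → HasDerivAt u
      ((3 * t ^ 2 * (t + 1) ^ 2 - t ^ 3 * (2 * (t + 1))) / ((t + 1) ^ 2) ^ 2
        - (φ + 2)) t := by
    intro t ht
    have ht1' : (0:ℝ) < t + 1 := by linarith
    have ht1 : t + 1 ≠ 0 := ne_of_gt ht1'
    have hnum : HasDerivAt (fun t : ℝ => t ^ 3) (3 * t ^ 2) t := by
      simpa using hasDerivAt_pow 3 t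
    have hden : HasDerivAt (fun t : ℝ => (t + 1) ^ 2) (2 * (t + 1)) t := by
      have := ((hasDerivAt_id t).add_const 1).pow 2
      exact this.congr_deriv (by simp)
    have hq := hnum.div hden (pow_ne_zero 2 ht1)
    have hl : HasDerivAt (fun t : ℝ => (φ + 2) * t) (φ + 2) t := by
      simpa using (hasDerivAt_id t).const_mul (φ + 2)
    have h := (hq.sub hl).add_const (2 * lam)
    exact h
  -- the derivative of u is negative on (0, ∞)
  have hudneg : ∀ t : ℝ, 0 < t →
      (3 * t ^ 2 * (t + 1) ^ 2 - t ^ 3 * (2 * (t + 1))) / ((t + 1) ^ 2) ^ 2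
        - (φ + 2) < 0 := by
    intro t ht
    have ht1 : (0:ℝ) < ((t + 1) ^ 2) ^ 2 := by positivity
    rw [sub_neg, div_lt_iff₀ ht1]
    nlinarith [sq_nonneg t, pow_pos ht 2, pow_pos ht 3, pow_pos ht 4,
      mul_pos ht ht]
  -- u is strictly decreasing on [0, ∞)
  have hcu : ContinuousOn u (Ici (0:ℝ)) := by
    apply ContinuousOn.add
    · apply ContinuousOn.sub
      · exact (continuous_pow 3).continuousOn.div
          ((continuous_id.add continuous_const).pow 2).continuousOn
          (fun x hx => by
            have hx0 : (0:ℝ) ≤ x := hx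
            positivity)
      · exact (continuous_const.mul continuous_id).continuousOn
    · exact continuousOn_const
  have hanti : StrictAntiOn u (Ici (0:ℝ)) := by
    apply strictAntiOn_of_deriv_neg (convex_Ici 0) hcu
    intro t ht
    rw [interior_Ici] at ht
    rw [(hud t ht).deriv]
    exact hudneg t ht
  -- find the root ξ
  set T : ℝ := 2 * lam / (φ + 1) + 1 with hTdef
  have hT0 : 0 < T := by positivity
  have hTval : (φ + 1) * T = 2 * lam + (φ + 1) := by
    rw [hTdef]; field_simp
  have huT : u T < 0 := by
    have h1 : T ^ 3 / (T + 1) ^ 2 ≤ T := by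
      rw [div_le_iff₀ (by positivity)]
      nlinarith [hT0.le]
    have h2 : u T ≤ T - (φ + 2) * T + 2 * lam := by
      simp only [hudef]; linarith
    nlinarith [hTval, hφ]
  have hu0 : u 0 = 2 * lam := by simp [hudef]
  have hmem : (0:ℝ) ∈ Ioo (u T) (u 0) := by
    refine ⟨huT, ?_⟩
    rw [hu0]; positivity
  have hivt := intermediate_value_Ioo' hT0.le (hcu.mono Icc_subset_Ici_self)
  obtain ⟨ξ, hξmem, hξval⟩ := hivt hmem
  have hξ0 : 0 < ξ := hξmem.1
  -- continuity of f at positive points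
  have hcf : ∀ t : ℝ, 0 < t → ContinuousAt f t := by
    intro t ht
    have ht0 : t ≠ 0 := ne_of_gt ht
    have ht1 : t + 1 ≠ 0 := by intro h; linarith [ht]
    exact ((continuousAt_const.div continuousAt_id ht0).sub
      (continuousAt_const.div
        ((continuous_id.add continuous_const).continuousAt) ht1)).sub
      (continuousAt_const.div ((continuous_pow 2).continuousAt)
        (pow_ne_zero 2 ht0))
  refine ⟨ξ, hξ0, ?_, ?_⟩
  · apply strictMonoOn_of_deriv_pos (convex_Ioo 0 ξ)
    · intro t ht
      exact (hcf t ht.1).continuousWithinAt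
    · intro t ht
      rw [interior_Ioo] at ht
      rw [(hfd t ht.1).deriv]
      apply div_pos _ (pow_pos ht.1 3)
      have h := hanti (le_of_lt ht.1) (le_of_lt hξ0) ht.2
      rw [hξval] at h
      exact h
  · apply strictAntiOn_of_deriv_neg (convex_Ioi ξ)
    · intro t ht
      exact (hcf t (lt_trans hξ0 ht)).continuousWithinAt
    · intro t ht
      rw [interior_Ioi] at ht
      have htpos : 0 < t := lt_trans hξ0 ht
      rw [(hfd t htpos).deriv]
      apply div_neg_of_neg_of_pos _ (pow_pos htpos 3)
      have h := hanti (le_of_lt hξ0) (le_of_lt htpos) ht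
      rw [hξval] at h
      exact h
end

section
/- Glaser's lemma: Let T be a positive continuous random variable with twice-differentiable density f, hazard rate h(t) = f(t)/∫ₜ^∞ f(s)ds, and η(t) = −(d/dt) log f(t). If there exists t₀ > 0 such that η is strictly increasing on (0,t₀) and strictly decreasing on (t₀,∞), and limₜ→0⁺ f(t) = 0, then h is upside-down bathtub shaped: there exists t₁ > 0 with h increasing on (0,t₁) and decreasing on (t₁,∞). -/
open MeasureTheory Set

/-- derivative of a function monotone on a neighborhood is nonnegative -/
lemma aux_deriv_nonneg_of_monotoneOn {g : ℝ → ℝ} {s : Set ℝ} {t d : ℝ}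
    (hs : s ∈ nhds t) (hm : MonotoneOn g s) (hd : HasDerivAt g d t) : 0 ≤ d := by
  have h1 : Filter.Tendsto (slope g t) (nhdsWithin t (Set.Ioi t)) (nhds d) :=
    (hasDerivAt_iff_tendsto_slope.mp hd).mono_left
      (nhdsWithin_mono _ (fun x hx => ne_of_gt hx))
  refine ge_of_tendsto h1 ?_
  have hts : t ∈ s := mem_of_mem_nhds hs
  filter_upwards [self_mem_nhdsWithin, nhdsWithin_le_nhds hs] with u hu hus
  rw [slope_def_field]
  exact div_nonneg (sub_nonneg.2 (hm hts hus (le_of_lt hu))) (sub_nonneg.2 (le_of_lt hu))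

lemma aux_deriv_nonpos_of_antitoneOn {g : ℝ → ℝ} {s : Set ℝ} {t d : ℝ}
    (hs : s ∈ nhds t) (hm : AntitoneOn g s) (hd : HasDerivAt g d t) : d ≤ 0 := by
  have := aux_deriv_nonneg_of_monotoneOn hs hm.neg hd.neg
  linarith

/-- derivative of the survival function -/
lemma aux_hasDerivAt_S {f : ℝ → ℝ} (hf_int : IntegrableOn f (Set.Ioi 0))
    (hc : ContinuousOn f (Set.Ioi 0)) {t : ℝ} (ht : 0 < t) :
    HasDerivAt (fun u => ∫ s in Set.Ioi u, f s) (-f t) t := by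
  set a := t / 2 with ha_def
  have ha : 0 < a := by positivity
  have hat : a < t := by rw [ha_def]; linarith
  have hint : ∀ u, a ≤ u → IntervalIntegrable f volume a u := by
    intro u hu
    rw [intervalIntegrable_iff, Set.uIoc_of_le hu]
    exact hf_int.mono_set (fun x hx => lt_trans ha hx.1)
  have hF : HasDerivAt (fun u => ∫ x in a..u, f x) (f t) t := by
    refine intervalIntegral.integral_hasDerivAt_right (hint t hat.le) ?_ ?_
    · exact ⟨Set.Ioi 0, isOpen_Ioi.mem_nhds ht, hf_int.aestronglyMeasurable⟩
    · exact hc.continuousAt (isOpen_Ioi.mem_nhds ht)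
  have hkey : ∀ u ∈ Set.Ioi a, (∫ s in Set.Ioi u, f s)
      = (∫ s in Set.Ioi a, f s) - ∫ x in a..u, f x := by
    intro u hu
    rw [intervalIntegral.integral_of_le (le_of_lt hu)]
    have hsplit : (∫ s in Set.Ioi a, f s)
        = (∫ s in Set.Ioc a u, f s) + ∫ s in Set.Ioi u, f s := by
      rw [← Set.Ioc_union_Ioi_eq_Ioi (le_of_lt hu)]
      refine setIntegral_union ?_ measurableSet_Ioi ?_ ?_
      · exact Set.Ioc_disjoint_Ioi le_rfl
      · exact hf_int.mono_set (fun x hx => lt_trans ha hx.1)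
      · exact hf_int.mono_set (fun x hx => lt_trans ha (lt_trans hu hx))
    linarith [hsplit]
  have heq : (fun u => ∫ s in Set.Ioi u, f s)
      =ᶠ[nhds t] (fun u => (∫ s in Set.Ioi a, f s) - ∫ x in a..u, f x) := by
    filter_upwards [isOpen_Ioi.mem_nhds (show t ∈ Set.Ioi a from hat)] with u hu
    exact hkey u hu
  have : HasDerivAt (fun u => (∫ s in Set.Ioi a, f s) - ∫ x in a..u, f x) (-f t) t :=
    hF.const_sub _
  exact this.congr_of_eventuallyEq heq
open MeasureTheory

/-- Glaser's lemma: if `η = −(log f)'` is unimodal (strictly increasing then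
strictly decreasing) and `f(t) → 0` as `t → 0⁺`, then the hazard rate
`h = f / S` is upside-down bathtub shaped. -/
theorem glaser_lemma (f : ℝ → ℝ)
    (hpos : ∀ t : ℝ, 0 < t → 0 < f t)
    (hsmooth : ContDiffOn ℝ 2 f (Set.Ioi 0))
    (hint : ∫ t in Set.Ioi (0 : ℝ), f t = 1)
    (hS : ∀ t : ℝ, 0 < t → 0 < ∫ s in Set.Ioi t, f s)
    (η : ℝ → ℝ)
    (hη : ∀ t : ℝ, 0 < t → η t = -deriv (fun s => Real.log (f s)) t)
    (t₀ : ℝ) (ht₀ : 0 < t₀)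
    (hinc : StrictMonoOn η (Set.Ioo 0 t₀))
    (hdec : StrictAntiOn η (Set.Ioi t₀))
    (hlim : Filter.Tendsto f (nhdsWithin 0 (Set.Ioi 0)) (nhds 0)) :
    ∃ t₁ : ℝ, 0 < t₁ ∧
      MonotoneOn (fun t => f t / ∫ s in Set.Ioi t, f s) (Set.Ioo 0 t₁) ∧
      AntitoneOn (fun t => f t / ∫ s in Set.Ioi t, f s) (Set.Ioi t₁) := by
  classical
  -- integrability of f
  have hf_int : IntegrableOn f (Set.Ioi 0) := by
    by_contra hcon
    rw [MeasureTheory.integral_undef hcon] at hint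
    norm_num at hint
  have hf_cont : ContinuousOn f (Set.Ioi 0) := hsmooth.continuousOn
  set S : ℝ → ℝ := fun u => ∫ s in Set.Ioi u, f s with hS_def
  have hSpos : ∀ t : ℝ, 0 < t → 0 < S t := by simp only [hS_def]; exact hS
  have hSd : ∀ t : ℝ, 0 < t → HasDerivAt S (-f t) t := by
    intro t ht; rw [hS_def]; exact aux_hasDerivAt_S hf_int hf_cont ht
  have hS_cont : ContinuousOn S (Set.Ioi 0) :=
    fun x hx => ((hSd x hx).continuousAt).continuousWithinAt
  have hS_ne : ∀ t : ℝ, 0 < t → S t ≠ 0 := fun t ht => ne_of_gt (hSpos t ht)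
  have hf_ne : ∀ t : ℝ, 0 < t → f t ≠ 0 := fun t ht => ne_of_gt (hpos t ht)
  -- derivatives of f
  have hfd : ∀ t : ℝ, 0 < t → HasDerivAt f (deriv f t) t := by
    intro t ht
    exact ((hsmooth.differentiableOn (by norm_num)).differentiableAt
      (isOpen_Ioi.mem_nhds ht)).hasDerivAt
  have hf'C1 : ContDiffOn ℝ 1 (deriv f) (Set.Ioi 0) :=
    hsmooth.deriv_of_isOpen isOpen_Ioi (by norm_num)
  have hf'd : ∀ t : ℝ, 0 < t → HasDerivAt (deriv f) (deriv (deriv f) t) t := by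
    intro t ht
    exact ((hf'C1.differentiableOn (by norm_num)).differentiableAt
      (isOpen_Ioi.mem_nhds ht)).hasDerivAt
  have hf'_cont : ContinuousOn (deriv f) (Set.Ioi 0) := hf'C1.continuousOn
  -- the key auxiliary function ψ (same sign as the derivative of the hazard rate)
  set ψ : ℝ → ℝ := fun u => f u + deriv f u * S u / f u with hψ_def
  have hη_eq : ∀ t : ℝ, 0 < t → η t = -(deriv f t / f t) := by
    intro t ht
    have hl : HasDerivAt (fun s => Real.log (f s)) ((f t)⁻¹ * deriv f t) t :=
      (Real.hasDerivAt_log (hf_ne t ht)).comp t (hfd t ht)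
    rw [hη t ht, hl.deriv]
    field_simp
  have hψ_eq : ∀ t : ℝ, 0 < t → ψ t = f t - η t * S t := by
    intro t ht
    rw [hψ_def, hη_eq t ht]
    field_simp
    ring
  have hηd : ∀ t : ℝ, 0 < t →
      HasDerivAt η (-((deriv (deriv f) t * f t - deriv f t * deriv f t) / f t ^ 2)) t := by
    intro t ht
    have hg : HasDerivAt (fun u => -(deriv f u / f u))
        (-((deriv (deriv f) t * f t - deriv f t * deriv f t) / f t ^ 2)) t :=
      ((hf'd t ht).div (hfd t ht) (hf_ne t ht)).neg
    refine hg.congr_of_eventuallyEq ?_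
    filter_upwards [isOpen_Ioi.mem_nhds ht] with u hu
    exact hη_eq u hu
  have hψd : ∀ t : ℝ, 0 < t →
      HasDerivAt ψ (S t * ((deriv (deriv f) t * f t - deriv f t * deriv f t) / f t ^ 2)) t := by
    intro t ht
    have h1 : HasDerivAt (fun u => deriv f u * S u)
        (deriv (deriv f) t * S t + deriv f t * (-f t)) t := (hf'd t ht).mul (hSd t ht)
    have h2 := h1.div (hfd t ht) (hf_ne t ht)
    have h3 := (hfd t ht).add h2
    rw [hψ_def]
    refine h3.congr_deriv ?_
    field_simp [hf_ne t ht]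
    ring
  have hψ_cont : ContinuousOn ψ (Set.Ioi 0) :=
    fun x hx => ((hψd x hx).continuousAt).continuousWithinAt
  -- monotonicity of ψ
  have hψ_anti : AntitoneOn ψ (Set.Ioc 0 t₀) := by
    refine antitoneOn_of_hasDerivWithinAt_nonpos
      (f' := fun x => S x * ((deriv (deriv f) x * f x - deriv f x * deriv f x) / f x ^ 2))
      (convex_Ioc 0 t₀)
      (hψ_cont.mono (fun x hx => hx.1))
      (fun x hx => ?_) (fun x hx => ?_)
    · rw [interior_Ioc] at hx
      exact (hψd x hx.1).hasDerivWithinAt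
    · rw [interior_Ioc] at hx
      have hD : 0 ≤ -((deriv (deriv f) x * f x - deriv f x * deriv f x) / f x ^ 2) :=
        aux_deriv_nonneg_of_monotoneOn (isOpen_Ioo.mem_nhds hx) hinc.monotoneOn (hηd x hx.1)
      nlinarith [hSpos x hx.1]
  have hψ_mono : MonotoneOn ψ (Set.Ici t₀) := by
    refine monotoneOn_of_hasDerivWithinAt_nonneg
      (f' := fun x => S x * ((deriv (deriv f) x * f x - deriv f x * deriv f x) / f x ^ 2))
      (convex_Ici t₀)
      (hψ_cont.mono (fun x hx => lt_of_lt_of_le ht₀ hx))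
      (fun x hx => ?_) (fun x hx => ?_)
    · rw [interior_Ici] at hx
      exact (hψd x (lt_trans ht₀ hx)).hasDerivWithinAt
    · rw [interior_Ici] at hx
      have hD : -((deriv (deriv f) x * f x - deriv f x * deriv f x) / f x ^ 2) ≤ 0 :=
        aux_deriv_nonpos_of_antitoneOn (isOpen_Ioi.mem_nhds hx) hdec.antitoneOn
          (hηd x (lt_trans ht₀ hx))
      nlinarith [hSpos x (lt_trans ht₀ hx)]
  have hS_anti : AntitoneOn S (Set.Ioi 0) := by
    refine antitoneOn_of_hasDerivWithinAt_nonpos (f' := fun x => -f x) (convex_Ioi 0) hS_cont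
      (fun x hx => ?_) (fun x hx => ?_)
    · rw [interior_Ioi] at hx
      exact (hSd x hx).hasDerivWithinAt
    · rw [interior_Ioi] at hx
      linarith [hpos x hx]
  -- derivative of the hazard rate h = f / S
  have hhd : ∀ t : ℝ, 0 < t →
      HasDerivAt (fun u => f u / S u) (f t * ψ t / S t ^ 2) t := by
    intro t ht
    have h1 := (hfd t ht).div (hSd t ht) (hS_ne t ht)
    refine h1.congr_deriv ?_
    rw [hψ_def]
    field_simp [hf_ne t ht, hS_ne t ht]
    ring
  have hh_cont : ContinuousOn (fun u => f u / S u) (Set.Ioi 0) :=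
    fun x hx => ((hhd x hx).continuousAt).continuousWithinAt
  -- near 0, ψ is positive somewhere
  obtain ⟨b, hb, hψb⟩ : ∃ b ∈ Set.Ioo 0 t₀, 0 < ψ b := by
    by_contra hcon
    push_neg at hcon
    have hf'neg : ∀ x ∈ Set.Ioo 0 t₀, deriv f x ≤ 0 := by
      intro x hx
      have h1 := hcon x hx
      rw [hψ_eq x hx.1] at h1
      have hSx := hSpos x hx.1
      have hfx := hpos x hx.1
      have hηx : 0 < η x := by nlinarith
      have hf'x : deriv f x = -η x * f x := by
        rw [hη_eq x hx.1]
        field_simp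
      rw [hf'x]
      nlinarith
    have hf_anti : AntitoneOn f (Set.Ioo 0 t₀) := by
      refine antitoneOn_of_hasDerivWithinAt_nonpos (f' := fun x => deriv f x)
        (convex_Ioo 0 t₀) (hf_cont.mono (fun x hx => hx.1)) (fun x hx => ?_) (fun x hx => ?_)
      · rw [interior_Ioo] at hx
        exact (hfd x hx.1).hasDerivWithinAt
      · rw [interior_Ioo] at hx
        exact hf'neg x hx
    have hc2 : (0:ℝ) < t₀ / 2 := by linarith
    have hmem : t₀ / 2 ∈ Set.Ioo (0:ℝ) t₀ := ⟨hc2, by linarith⟩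
    have hev : ∀ᶠ x in nhdsWithin 0 (Set.Ioi 0), f (t₀ / 2) ≤ f x := by
      filter_upwards [Ioo_mem_nhdsGT_of_mem (Set.mem_Ico.mpr ⟨le_refl (0:ℝ), hc2⟩)] with x hx
      exact hf_anti ⟨hx.1, lt_trans hx.2 hmem.2⟩ hmem hx.2.le
    have := ge_of_tendsto hlim hev
    linarith [hpos _ hc2]
  -- tail lemma: ψ cannot be positive beyond t₀
  have tail : ∀ c : ℝ, t₀ < c → 0 < ψ c → False := by
    intro c hc hψc
    have hc0 : 0 < c := lt_trans ht₀ hc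
    have hψtail : ∀ u, c ≤ u → ψ c ≤ ψ u := fun u hu =>
      hψ_mono (Set.mem_Ici.mpr hc.le) (Set.mem_Ici.mpr (le_trans hc.le hu)) hu
    have hhc : 0 < f c / S c := div_pos (hpos c hc0) (hSpos c hc0)
    have hpos' : ∀ u : ℝ, c ≤ u → 0 < u := fun u hu => lt_of_lt_of_le hc0 hu
    have hh_mono : MonotoneOn (fun u => f u / S u) (Set.Ici c) := by
      refine monotoneOn_of_hasDerivWithinAt_nonneg (f' := fun x => f x * ψ x / S x ^ 2)
        (convex_Ici c) (hh_cont.mono (fun x hx => hpos' x hx)) (fun x hx => ?_)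
        (fun x hx => ?_)
      · rw [interior_Ici] at hx
        exact (hhd x (hpos' x hx.le)).hasDerivWithinAt
      · rw [interior_Ici] at hx
        have h1 := lt_of_lt_of_le hψc (hψtail x hx.le)
        have h2 := hpos x (hpos' x hx.le)
        have h3 := hSpos x (hpos' x hx.le)
        positivity
    set δ := (f c / S c) * (ψ c / S c) with hδ_def
    have hδpos : 0 < δ := mul_pos hhc (div_pos hψc (hSpos c hc0))
    have hδle : ∀ u, c ≤ u → δ ≤ f u * ψ u / S u ^ 2 := by
      intro u hu
      have hu0 := hpos' u hu
      have h1 : f c / S c ≤ f u / S u :=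
        hh_mono (Set.mem_Ici.mpr le_rfl) (Set.mem_Ici.mpr hu) hu
      have hψu : ψ c ≤ ψ u := hψtail u hu
      have hSle : S u ≤ S c := hS_anti (Set.mem_Ioi.mpr hc0) (Set.mem_Ioi.mpr hu0) hu
      have h2 : ψ c / S c ≤ ψ u / S u :=
        div_le_div₀ (le_of_lt (lt_of_lt_of_le hψc hψu)) hψu (hSpos u hu0) hSle
      have h3 : (f c / S c) * (ψ c / S c) ≤ (f u / S u) * (ψ u / S u) :=
        mul_le_mul h1 h2 (le_of_lt (div_pos hψc (hSpos c hc0))) (le_trans hhc.le h1)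
      calc δ ≤ (f u / S u) * (ψ u / S u) := h3
        _ = f u * ψ u / S u ^ 2 := by rw [div_mul_div_comm, sq]
    have hlin : ∀ u, c ≤ u → f c / S c + δ * (u - c) ≤ f u / S u := by
      have hm : MonotoneOn (fun u => f u / S u - δ * u) (Set.Ici c) := by
        refine monotoneOn_of_hasDerivWithinAt_nonneg
          (f' := fun x => f x * ψ x / S x ^ 2 - δ) (convex_Ici c)
          ((hh_cont.mono (fun x hx => hpos' x hx)).sub
            (continuousOn_const.mul continuousOn_id)) (fun x hx => ?_) (fun x hx => ?_)
        · rw [interior_Ici] at hx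
          have hd2 : HasDerivAt (fun u : ℝ => δ * u) δ x := by
            simpa using (hasDerivAt_id x).const_mul δ
          exact ((hhd x (hpos' x hx.le)).sub hd2).hasDerivWithinAt
        · rw [interior_Ici] at hx
          linarith [hδle x hx.le]
      intro u hu
      have h := hm (Set.mem_Ici.mpr le_rfl) (Set.mem_Ici.mpr hu) hu
      dsimp only at h
      linarith
    set M := max (η c) 1 with hM_def
    have hM1 : (1:ℝ) ≤ M := le_max_right _ _
    have hMpos : (0:ℝ) < M := lt_of_lt_of_le one_pos hM1
    have hηle : ∀ u, c ≤ u → η u ≤ M := by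
      intro u hu
      rcases eq_or_lt_of_le hu with rfl | h
      · exact le_max_left _ _
      · exact le_trans (le_of_lt (hdec (Set.mem_Ioi.mpr hc)
          (Set.mem_Ioi.mpr (lt_trans hc h)) h)) (le_max_left _ _)
    set a := c + 2 * M / δ with ha_def
    have hca : c ≤ a := by
      rw [ha_def]
      have : 0 ≤ 2 * M / δ := by positivity
      linarith
    have ha0 : 0 < a := lt_of_lt_of_le hc0 hca
    have hha : ∀ u, a ≤ u → 2 * M ≤ f u / S u := by
      intro u hu
      have hcu : c ≤ u := le_trans hca hu
      have h1 := hlin u hcu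
      have h2 : 2 * M / δ ≤ u - c := by rw [ha_def] at hu; linarith
      have h3 : δ * (2 * M / δ) ≤ δ * (u - c) := mul_le_mul_of_nonneg_left h2 hδpos.le
      have h4 : δ * (2 * M / δ) = 2 * M := by field_simp
      linarith
    have hψhalf : ∀ u, a ≤ u → f u / 2 ≤ ψ u := by
      intro u hu
      have hcu : c ≤ u := le_trans hca hu
      have hu0 := hpos' u hcu
      have hSu := hSpos u hu0
      have hfu := hpos u hu0
      have h1 : η u ≤ M := hηle u hcu
      have h2 : 2 * M ≤ f u / S u := hha u hu
      have h3 : η u * S u ≤ M * S u := mul_le_mul_of_nonneg_right h1 hSu.le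
      have h4 : M * S u ≤ (f u / S u) / 2 * S u := by
        refine mul_le_mul_of_nonneg_right ?_ hSu.le
        linarith
      have h5 : (f u / S u) / 2 * S u = f u / 2 := by
        field_simp
      rw [hψ_eq u hu0]
      linarith
    -- the function u/2 + 1/h(u) is decreasing on [a, ∞) but positive : contradiction
    have hwd : ∀ x : ℝ, 0 < x →
        HasDerivAt (fun u => u / 2 + (f u / S u)⁻¹)
          (1 / 2 + -(f x * ψ x / S x ^ 2) / (f x / S x) ^ 2) x := by
      intro x hx0
      have hne : f x / S x ≠ 0 := ne_of_gt (div_pos (hpos x hx0) (hSpos x hx0))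
      have h1 : HasDerivAt (fun u => (f u / S u)⁻¹)
          (-(f x * ψ x / S x ^ 2) / (f x / S x) ^ 2) x := (hhd x hx0).inv hne
      have h2 : HasDerivAt (fun u : ℝ => u / 2) (1 / 2) x := by
        simpa using (hasDerivAt_id x).div_const 2
      exact h2.add h1
    have hw_anti : AntitoneOn (fun u => u / 2 + (f u / S u)⁻¹) (Set.Ici a) := by
      refine antitoneOn_of_hasDerivWithinAt_nonpos
        (f' := fun x => 1 / 2 + -(f x * ψ x / S x ^ 2) / (f x / S x) ^ 2) (convex_Ici a)
        (fun x hx => ((hwd x (lt_of_lt_of_le ha0 hx)).continuousAt).continuousWithinAt)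
        (fun x hx => ?_) (fun x hx => ?_)
      · rw [interior_Ici] at hx
        exact (hwd x (lt_trans ha0 hx)).hasDerivWithinAt
      · rw [interior_Ici] at hx
        have hx0 : 0 < x := lt_trans ha0 hx
        have hfx := hpos x hx0
        have hSx := hSpos x hx0
        have hψx : f x / 2 ≤ ψ x := hψhalf x hx.le
        have hQ : 0 < (f x / S x) ^ 2 := by positivity
        have key : (f x / S x) ^ 2 / 2 ≤ f x * ψ x / S x ^ 2 := by
          have heq : (f x / S x) ^ 2 / 2 = f x * (f x / 2) / S x ^ 2 := by
            field_simp
          rw [heq]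
          gcongr
        have h8 : (f x / S x) ^ 2 / 2 / (f x / S x) ^ 2
            ≤ (f x * ψ x / S x ^ 2) / (f x / S x) ^ 2 := by gcongr
        have h7 : (f x / S x) ^ 2 / 2 / (f x / S x) ^ 2 = 1 / 2 := by
          field_simp
        rw [neg_div]
        rw [h7] at h8
        linarith
    have hva : 0 < (f a / S a)⁻¹ := inv_pos.mpr (div_pos (hpos a ha0) (hSpos a ha0))
    set u₂ := a + 2 * (f a / S a)⁻¹ + 2 with hu₂_def
    have hau : a ≤ u₂ := by rw [hu₂_def]; linarith
    have hu₂0 : 0 < u₂ := lt_of_lt_of_le ha0 hau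
    have h9 := hw_anti (Set.mem_Ici.mpr le_rfl) (Set.mem_Ici.mpr hau) hau
    dsimp only at h9
    have hvu : 0 < (f u₂ / S u₂)⁻¹ := inv_pos.mpr (div_pos (hpos u₂ hu₂0) (hSpos u₂ hu₂0))
    rw [hu₂_def] at h9 hvu
    linarith
  have hψ_t0 : ∀ t : ℝ, t₀ < t → ψ t ≤ 0 := by
    intro t ht
    by_contra hcon
    exact tail t ht (lt_of_not_ge hcon)
  -- definition of the mode t₁ of the hazard rate
  set A : Set ℝ := {t | 0 < t ∧ ψ t ≤ 0} with hA_def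
  have hA_ne : A.Nonempty := ⟨t₀ + 1, by positivity, hψ_t0 _ (by linarith)⟩
  have hbA : ∀ a ∈ A, b < a := by
    intro a ha
    by_contra hcon
    push_neg at hcon
    have : ψ b ≤ ψ a := hψ_anti ⟨ha.1, le_trans hcon hb.2.le⟩ ⟨hb.1, hb.2.le⟩ hcon
    linarith [ha.2]
  have hA_bdd : BddBelow A := ⟨b, fun a ha => (hbA a ha).le⟩
  set t₁ := sInf A with ht₁_def
  have ht₁_pos : 0 < t₁ :=
    lt_of_lt_of_le hb.1 (le_csInf hA_ne (fun a ha => (hbA a ha).le))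
  have hψpos_lt : ∀ t ∈ Set.Ioo 0 t₁, 0 < ψ t := by
    intro t ht
    by_contra hcon
    have htA : t ∈ A := ⟨ht.1, le_of_not_gt hcon⟩
    have := csInf_le hA_bdd htA
    linarith [ht.2]
  have hψnonpos_gt : ∀ t : ℝ, t₁ < t → ψ t ≤ 0 := by
    intro t ht
    obtain ⟨a, haA, hat⟩ := exists_lt_of_csInf_lt hA_ne ht
    rcases le_or_gt t t₀ with hle | hgt
    · exact le_trans (hψ_anti ⟨haA.1, le_trans hat.le hle⟩ ⟨lt_trans haA.1 hat, hle⟩ hat.le)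
        haA.2
    · exact hψ_t0 t hgt
  refine ⟨t₁, ht₁_pos, ?_, ?_⟩
  · have hm : MonotoneOn (fun t => f t / S t) (Set.Ioo 0 t₁) := by
      refine monotoneOn_of_hasDerivWithinAt_nonneg
        (f' := fun x => f x * ψ x / S x ^ 2) (convex_Ioo 0 t₁)
        (hh_cont.mono (fun x hx => hx.1)) (fun x hx => ?_) (fun x hx => ?_)
      · rw [interior_Ioo] at hx
        exact (hhd x hx.1).hasDerivWithinAt
      · rw [interior_Ioo] at hx
        have := hψpos_lt x hx
        have := hpos x hx.1
        have := hSpos x hx.1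
        positivity
    simpa only [hS_def] using hm
  · have hm : AntitoneOn (fun t => f t / S t) (Set.Ioi t₁) := by
      refine antitoneOn_of_hasDerivWithinAt_nonpos
        (f' := fun x => f x * ψ x / S x ^ 2) (convex_Ioi t₁)
        (hh_cont.mono (fun x hx => lt_trans ht₁_pos hx)) (fun x hx => ?_) (fun x hx => ?_)
      · rw [interior_Ioi] at hx
        exact (hhd x (lt_trans ht₁_pos hx)).hasDerivWithinAt
      · rw [interior_Ioi] at hx
        have h1 := hψnonpos_gt x hx
        have h2 := hpos x (lt_trans ht₁_pos hx)
        have h3 := hSpos x (lt_trans ht₁_pos hx)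
        have : f x * ψ x ≤ 0 := mul_nonpos_of_nonneg_of_nonpos h2.le h1
        exact div_nonpos_of_nonpos_of_nonneg this (sq_nonneg _)
    simpa only [hS_def] using hm
end

section
/- The 2×2 matrix K with entries K₁₁ = n ψ'(φ) − n/(λ+φ)², K₁₂ = K₂₁ = n/λ + n/(λ+φ)² (up to the paper's sign convention, take the symmetric matrix with these absolute entries), K₂₂ = n(φ+1)/λ² − n/(λ+φ)², where the diagonal entries are taken as nψ'(φ) − n/(λ+φ)² and n(φ+1)/λ² − n/(λ+φ)², is positive definite for all φ > 0, λ > 0, n ≥ 1. In particular its determinant is positive: (ψ'(φ) − 1/(λ+φ)²)((φ+1)/λ² − 1/(λ+φ)²) − (1/λ + 1/(λ+φ)²)² > 0. -/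
/-- The trigamma function `ψ' = (log Γ)''`. -/
noncomputable def trigamma (x : ℝ) : ℝ :=
  deriv (deriv (fun y => Real.log (Real.Gamma y))) x

open Real Filter Topology Set

namespace IWLAux

/-- The digamma function. -/
noncomputable def digam : ℝ → ℝ := deriv (fun y => Real.log (Real.Gamma y))

lemma logGamma_diffAt {x : ℝ} (hx : 0 < x) :
    DifferentiableAt ℝ (fun y => Real.log (Real.Gamma y)) x := by
  have hne : ∀ m : ℕ, x ≠ -m := fun m =>
    ne_of_gt (lt_of_le_of_lt (neg_nonpos.mpr (Nat.cast_nonneg m)) hx)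
  exact (Real.differentiableAt_Gamma hne).log (Real.Gamma_ne_zero hne)

lemma digam_rec {x : ℝ} (hx : 0 < x) : digam (x + 1) = digam x + 1 / x := by
  unfold digam
  rw [← deriv_comp_add_const, one_div, ← Real.deriv_log x,
    ← deriv_add (logGamma_diffAt hx) (Real.differentiableAt_log hx.ne')]
  apply Filter.EventuallyEq.deriv_eq
  filter_upwards [eventually_gt_nhds hx] with y hy
  rw [Real.Gamma_add_one hy.ne', Real.log_mul hy.ne' (Real.Gamma_pos_of_pos hy).ne']
  simp [add_comm]

lemma digam_add_nat {x : ℝ} (hx : 0 < x) (n : ℕ) :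
    digam (x + n + 1) = digam x + ∑ m ∈ Finset.range (n + 1), 1 / (x + m) := by
  induction n with
  | zero => simpa using digam_rec hx
  | succ n ih =>
      have hx' : 0 < x + n + 1 := by positivity
      have h := digam_rec hx'
      have e1 : x + ((n:ℕ) + 1 : ℕ) + 1 = (x + n + 1) + 1 := by push_cast; ring
      rw [e1, h, ih, Finset.sum_range_succ (f := fun m : ℕ => 1 / (x + (m:ℝ))) (n := n + 1)]
      push_cast
      ring

lemma convexOn_lg : ConvexOn ℝ (Set.Ioi 0) fun y => Real.log (Real.Gamma y) := by
  simpa [Function.comp_def] using Real.convexOn_log_Gamma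

lemma digam_ge {y : ℝ} (hy : 0 < y) : Real.log y ≤ digam (y + 1) := by
  have h := convexOn_lg.slope_le_deriv (Set.mem_Ioi.mpr hy)
    (Set.mem_Ioi.mpr (by linarith : (0:ℝ) < y + 1)) (by linarith)
    (logGamma_diffAt (by linarith))
  rw [slope_def_field] at h
  have he : Real.log (Real.Gamma (y + 1)) - Real.log (Real.Gamma y) = Real.log y := by
    rw [Real.Gamma_add_one hy.ne', Real.log_mul hy.ne' (Real.Gamma_pos_of_pos hy).ne']
    ring
  rw [show y + 1 - y = (1:ℝ) by ring, div_one, he] at h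
  exact h

lemma digam_le {y : ℝ} (hy : 0 < y) : digam (y + 1) ≤ Real.log (y + 1) := by
  have h := convexOn_lg.deriv_le_slope (Set.mem_Ioi.mpr (by linarith : (0:ℝ) < y + 1))
    (Set.mem_Ioi.mpr (by linarith : (0:ℝ) < y + 2)) (by linarith)
    (logGamma_diffAt (by linarith))
  rw [slope_def_field] at h
  have hy1 : (0:ℝ) < y + 1 := by linarith
  have he : Real.log (Real.Gamma (y + 2)) - Real.log (Real.Gamma (y + 1)) = Real.log (y + 1) := by
    rw [show y + 2 = (y + 1) + 1 by ring, Real.Gamma_add_one hy1.ne',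
      Real.log_mul hy1.ne' (Real.Gamma_pos_of_pos hy1).ne']
    ring
  rw [show y + 2 - (y + 1) = (1:ℝ) by ring, div_one, he] at h
  exact h

/-- The approximating functions. -/
noncomputable def G (n : ℕ) (x : ℝ) : ℝ :=
  Real.log (x + n) - ∑ m ∈ Finset.range (n + 1), 1 / (x + m)

lemma tendsto_G {x : ℝ} (hx : 0 < x) :
    Tendsto (fun n : ℕ => G n x) atTop (𝓝 (digam x)) := by
  have hxn : ∀ n : ℕ, (0:ℝ) < x + n := fun n => by positivity
  have key : ∀ n : ℕ, G n x = digam x + (Real.log (x + n) - digam (x + n + 1)) := by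
    intro n
    have := digam_add_nat hx n
    unfold G
    linarith [this]
  have hub : ∀ n : ℕ, G n x ≤ digam x := by
    intro n
    rw [key n]
    linarith [digam_ge (hxn n)]
  have hlb : ∀ n : ℕ, digam x - 1 / (x + n) ≤ G n x := by
    intro n
    rw [key n]
    have h1 : digam (x + n + 1) ≤ Real.log (x + n + 1) := digam_le (hxn n)
    have h2 : Real.log (x + n + 1) - Real.log (x + n) ≤ 1 / (x + n) := by
      rw [← Real.log_div (by positivity) (hxn n).ne']
      have := Real.log_le_sub_one_of_pos (show (0:ℝ) < (x + n + 1)/(x + n) by positivity)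
      have he : (x + n + 1) / (x + n) - 1 = 1 / (x + n) := by
        field_simp
        ring
      linarith
    linarith
  have h0 : Tendsto (fun n : ℕ => digam x - 1 / (x + n)) atTop (𝓝 (digam x)) := by
    have hxt : Tendsto (fun n : ℕ => x + (n:ℝ)) atTop atTop :=
      tendsto_atTop_add_const_left _ _ tendsto_natCast_atTop_atTop
    have := tendsto_inv_atTop_zero.comp hxt
    simpa [one_div] using (tendsto_const_nhds (x := digam x)).sub this
  exact tendsto_of_tendsto_of_tendsto_of_le_of_le h0 tendsto_const_nhds hlb hub

lemma hasDerivAt_G (n : ℕ) {x : ℝ} (hx : 0 < x) :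
    HasDerivAt (G n) ((x + n)⁻¹ + ∑ m ∈ Finset.range (n + 1), 1 / (x + m) ^ 2) x := by
  have h1 : HasDerivAt (fun y : ℝ => Real.log (y + n)) (x + n)⁻¹ x := by
    have h := (Real.hasDerivAt_log (show x + (n:ℝ) ≠ 0 by positivity)).comp x
      ((hasDerivAt_id' x).add_const (n : ℝ))
    simpa [Function.comp_def] using h
  have h2 : HasDerivAt (fun y : ℝ => ∑ m ∈ Finset.range (n + 1), 1 / (y + m))
      (∑ m ∈ Finset.range (n + 1), -(1 / (x + m) ^ 2)) x := by
    apply HasDerivAt.fun_sum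
    intro m _
    have hxm : x + (m:ℝ) ≠ 0 := by positivity
    have h := ((hasDerivAt_id' x).add_const (m : ℝ)).inv hxm
    convert h using 1
    rfl
    · funext y
      simp [one_div]
    ring
  have := h1.sub h2
  refine this.congr_deriv ?_
  rw [Finset.sum_neg_distrib]
  ring

/-- The trigamma series. -/
noncomputable def psi (x : ℝ) : ℝ := ∑' m : ℕ, 1 / (x + m) ^ 2

lemma summable_psi {x : ℝ} (hx : 0 < x) : Summable fun m : ℕ => 1 / (x + m) ^ 2 := by
  rw [← summable_nat_add_iff 1]
  have hs : Summable fun m : ℕ => 1 / ((m:ℝ) + 1) ^ 2 := by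
    have := (summable_nat_add_iff (f := fun m : ℕ => 1 / (m:ℝ) ^ 2) 1).mpr
      (Real.summable_one_div_nat_pow.mpr one_lt_two)
    simpa using this
  apply Summable.of_nonneg_of_le (fun m => by positivity) (fun m => ?_) hs
  have h1 : (0:ℝ) < (m:ℝ) + 1 := by positivity
  have h2 : (m:ℝ) + 1 ≤ x + (m + 1 : ℕ) := by push_cast; linarith
  apply one_div_le_one_div_of_le (by positivity)
  have : (0:ℝ) ≤ (m:ℝ) + 1 := le_of_lt h1
  nlinarith

set_option maxHeartbeats 1000000 in
lemma tlu : TendstoLocallyUniformlyOn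
    (fun (n : ℕ) (x : ℝ) => (x + n)⁻¹ + ∑ m ∈ Finset.range (n + 1), 1 / (x + m) ^ 2)
    (fun x => psi x) atTop (Set.Ioi 0) := by
  rw [tendstoLocallyUniformlyOn_iff_forall_isCompact isOpen_Ioi]
  intro K hK hKc
  rcases K.eq_empty_or_nonempty with h | h
  · rw [h]; exact tendstoUniformlyOn_empty
  obtain ⟨a, haK, ha⟩ := hKc.exists_isLeast h
  have ha0 : 0 < a := hK haK
  rw [Metric.tendstoUniformlyOn_iff]
  intro ε hε
  -- the tail bound sequence
  have hta : Tendsto (fun n : ℕ => (a + n)⁻¹ + ∑' m : ℕ, 1 / (a + (m + (n+1) : ℕ)) ^ 2)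
      atTop (𝓝 0) := by
    have h1 : Tendsto (fun n : ℕ => (a + (n:ℝ))⁻¹) atTop (𝓝 0) :=
      tendsto_inv_atTop_zero.comp (tendsto_atTop_add_const_left _ _ tendsto_natCast_atTop_atTop)
    have h2 : Tendsto (fun n : ℕ => ∑' m : ℕ, 1 / (a + (m + n : ℕ)) ^ 2) atTop (𝓝 0) :=
      tendsto_sum_nat_add (fun k : ℕ => 1 / (a + (k:ℝ)) ^ 2)
    have h2' : Tendsto (fun n : ℕ => ∑' m : ℕ, 1 / (a + (m + (n+1) : ℕ)) ^ 2) atTop (𝓝 0) :=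
      h2.comp (tendsto_add_atTop_nat 1)
    simpa using h1.add h2'
  have := (hta.eventually (eventually_lt_nhds hε))
  filter_upwards [this] with n hn x hxK
  have hxa : a ≤ x := ha hxK
  have hx0 : 0 < x := hK hxK
  rw [Real.dist_eq]
  have hsum : Summable fun m : ℕ => 1 / (x + m) ^ 2 := summable_psi hx0
  have hsplit : psi x = (∑ m ∈ Finset.range (n + 1), 1 / (x + m) ^ 2) +
      ∑' m : ℕ, 1 / (x + (m + (n+1) : ℕ)) ^ 2 := (Summable.sum_add_tsum_nat_add (n+1) hsum).symm
  have htail_le : ∑' m : ℕ, 1 / (x + (m + (n+1) : ℕ)) ^ 2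
      ≤ ∑' m : ℕ, 1 / (a + (m + (n+1) : ℕ)) ^ 2 := by
    refine Summable.tsum_le_tsum (fun m => ?_)
      ((summable_nat_add_iff (f := fun m : ℕ => 1 / (x + (m:ℝ)) ^ 2) (n+1)).mpr hsum)
      ((summable_nat_add_iff (f := fun m : ℕ => 1 / (a + (m:ℝ)) ^ 2) (n+1)).mpr (summable_psi ha0))
    have h1 : (0:ℝ) < a + ((m + (n+1) : ℕ):ℝ) := by positivity
    have h2 : a + ((m + (n+1) : ℕ):ℝ) ≤ x + ((m + (n+1) : ℕ):ℝ) := by linarith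
    apply one_div_le_one_div_of_le (by positivity)
    nlinarith
  have htail_nonneg : (0:ℝ) ≤ ∑' m : ℕ, 1 / (x + (m + (n+1) : ℕ)) ^ 2 :=
    tsum_nonneg fun m => by positivity
  have hxninv : (x + (n:ℝ))⁻¹ ≤ (a + (n:ℝ))⁻¹ := by
    apply inv_anti₀ (by positivity)
    linarith
  have hxninv0 : (0:ℝ) ≤ (x + (n:ℝ))⁻¹ := by positivity
  have hainv0 : (0:ℝ) ≤ (a + (n:ℝ))⁻¹ := by positivity
  have htaila : (0:ℝ) ≤ ∑' m : ℕ, 1 / (a + (m + (n+1) : ℕ)) ^ 2 :=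
    tsum_nonneg fun m => by positivity
  have habs : |psi x - ((x + n)⁻¹ + ∑ m ∈ Finset.range (n + 1), 1 / (x + m) ^ 2)|
      ≤ (a + n)⁻¹ + ∑' m : ℕ, 1 / (a + (m + (n+1) : ℕ)) ^ 2 := by
    rw [hsplit, abs_le]
    constructor
    · linarith
    · linarith
  calc |psi x - ((x + n)⁻¹ + ∑ m ∈ Finset.range (n + 1), 1 / (x + m) ^ 2)|
      ≤ (a + n)⁻¹ + ∑' m : ℕ, 1 / (a + (m + (n+1) : ℕ)) ^ 2 := habs
    _ < ε := hn

lemma hasDerivAt_digam {x : ℝ} (hx : 0 < x) : HasDerivAt digam (psi x) x := by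
  apply hasDerivAt_of_tendstoLocallyUniformlyOn isOpen_Ioi tlu
    (Eventually.of_forall fun n y hy => hasDerivAt_G n hy)
    (fun y hy => tendsto_G hy) hx

lemma trigamma_eq {x : ℝ} (hx : 0 < x) : trigamma x = psi x :=
  (hasDerivAt_digam hx).deriv

/-- Telescoping lower bound for the tail of the trigamma series. -/
lemma psi_gt {x : ℝ} (hx : 0 < x) : 1 / x + 1 / (2 * x ^ 2) < psi x := by
  set c : ℕ → ℝ := fun m => 1 / (x + m) + 1 / (2 * (x + m) ^ 2) with hc
  have hgap : ∀ m : ℕ, 1 / (x + m) ^ 2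
      = c m - c (m + 1) + 1 / (2 * (x + m) ^ 2 * (x + m + 1) ^ 2) := by
    intro m
    have h1 : (0:ℝ) < x + m := by positivity
    have h2 : (0:ℝ) < x + m + 1 := by positivity
    simp only [hc]
    push_cast
    field_simp
    ring
  have hpartial : ∀ N : ℕ, ∑ m ∈ Finset.range (N + 1), 1 / (x + m) ^ 2
      ≥ c 0 - c (N + 1) + 1 / (2 * x ^ 2 * (x + 1) ^ 2) := by
    intro N
    induction N with
    | zero =>
        simp only [zero_add, Finset.sum_range_one]
        rw [hgap 0]
        apply le_of_eq
        push_cast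
        ring
    | succ N ih =>
        rw [Finset.sum_range_succ, hgap (N + 1)]
        have h1 : (0:ℝ) < x + (N + 1 : ℕ) := by positivity
        have h2 : (0:ℝ) < x + (N + 1 : ℕ) + 1 := by positivity
        have h3 : (0:ℝ) ≤ 1 / (2 * (x + (N+1:ℕ)) ^ 2 * (x + (N+1:ℕ) + 1) ^ 2) := by positivity
        push_cast at ih h3 ⊢
        linarith
  have hcN : Tendsto (fun N : ℕ => c (N + 1)) atTop (𝓝 0) := by
    have hxt : Tendsto (fun N : ℕ => x + ((N:ℝ) + 1)) atTop atTop :=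
      tendsto_atTop_add_const_left _ _
        (tendsto_atTop_add_const_right _ _ tendsto_natCast_atTop_atTop)
    have h1 : Tendsto (fun N : ℕ => 1 / (x + ((N:ℝ)+1))) atTop (𝓝 0) := by
      simpa [one_div, Function.comp_def] using tendsto_inv_atTop_zero.comp hxt
    have h2 : Tendsto (fun N : ℕ => 1 / (2 * (x + ((N:ℝ)+1)) ^ 2)) atTop (𝓝 0) := by
      simp only [one_div]
      exact tendsto_inv_atTop_zero.comp
        (((tendsto_pow_atTop two_ne_zero).comp hxt).const_mul_atTop two_pos)
    have h3 := h1.add h2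
    simp only [add_zero] at h3
    apply h3.congr
    intro N
    simp only [hc]
    push_cast
    ring
  have hS : Tendsto (fun N : ℕ => ∑ m ∈ Finset.range (N + 1), 1 / (x + m) ^ 2)
      atTop (𝓝 (psi x)) :=
    ((summable_psi hx).hasSum.tendsto_sum_nat).comp (tendsto_add_atTop_nat 1)
  have hA : Tendsto (fun N : ℕ => c 0 - c (N + 1) + 1 / (2 * x ^ 2 * (x + 1) ^ 2))
      atTop (𝓝 (c 0 - 0 + 1 / (2 * x ^ 2 * (x + 1) ^ 2))) :=
    (tendsto_const_nhds.sub hcN).add tendsto_const_nhds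
  have hle : c 0 - 0 + 1 / (2 * x ^ 2 * (x + 1) ^ 2) ≤ psi x :=
    le_of_tendsto_of_tendsto' hA hS fun N => hpartial N
  have hc0 : c 0 = 1 / x + 1 / (2 * x ^ 2) := by simp [hc]
  have hpos : (0:ℝ) < 1 / (2 * x ^ 2 * (x + 1) ^ 2) := by positivity
  rw [hc0] at hle
  linarith

/-- The key lower bound for trigamma. -/
lemma trigamma_gt {x : ℝ} (hx : 0 < x) :
    1 / x ^ 2 + 1 / (x + 1) + 1 / (2 * (x + 1) ^ 2) < trigamma x := by
  rw [trigamma_eq hx]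
  have hx1 : (0:ℝ) < x + 1 := by linarith
  have hshift : psi x = 1 / x ^ 2 + psi (x + 1) := by
    unfold psi
    rw [Summable.tsum_eq_zero_add (summable_psi hx)]
    congr 1
    · simp
    · apply tsum_congr
      intro m
      congr 2
      push_cast
      ring
  rw [hshift]
  have := psi_gt hx1
  linarith

/-- Positivity of the determinant expression given the trigamma lower bound. -/
lemma det_pos {p l T : ℝ} (hp : 0 < p) (hl : 0 < l)
    (hT : 1 / p ^ 2 + 1 / (p + 1) + 1 / (2 * (p + 1) ^ 2) ≤ T) :
    0 < (T - 1 / (l + p) ^ 2) * ((p + 1) / l ^ 2 - 1 / (l + p) ^ 2)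
      - (1 / l + 1 / (l + p) ^ 2) ^ 2 := by
  have hlp : (0:ℝ) < l + p := by linarith
  have hB : 0 < (p + 1) / l ^ 2 - 1 / (l + p) ^ 2 := by
    rw [sub_pos, div_lt_div_iff₀ (by positivity) (by positivity)]
    nlinarith [mul_pos hl hp, sq_nonneg p]
  have key : 0 < ((1 / p ^ 2 + 1 / (p + 1) + 1 / (2 * (p + 1) ^ 2)) - 1 / (l + p) ^ 2) *
      ((p + 1) / l ^ 2 - 1 / (l + p) ^ 2) - (1 / l + 1 / (l + p) ^ 2) ^ 2 := by
    have hp1 : (0:ℝ) < p + 1 := by linarith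
    have hEq : ((1 / p ^ 2 + 1 / (p + 1) + 1 / (2 * (p + 1) ^ 2)) - 1 / (l + p) ^ 2) *
        ((p + 1) / l ^ 2 - 1 / (l + p) ^ 2) - (1 / l + 1 / (l + p) ^ 2) ^ 2
        = (4*p*l^3 + 2*p*l^4 + 8*p^2*l^2 + 12*p^2*l^3 + 2*p^2*l^4 + 4*p^3*l + 18*p^3*l^2
            + 10*p^3*l^3 + p^3*l^4 + 8*p^4*l + 15*p^4*l^2 + 4*p^4*l^3 + 8*p^5*l + 6*p^5*l^2
            + p^6 + 4*p^6*l + p^7)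
          / (2 * p ^ 2 * (p + 1) ^ 2 * l ^ 2 * (l + p) ^ 4) := by
      field_simp
      ring
    rw [hEq]
    positivity
  have hmono : ((1 / p ^ 2 + 1 / (p + 1) + 1 / (2 * (p + 1) ^ 2)) - 1 / (l + p) ^ 2) *
      ((p + 1) / l ^ 2 - 1 / (l + p) ^ 2)
      ≤ (T - 1 / (l + p) ^ 2) * ((p + 1) / l ^ 2 - 1 / (l + p) ^ 2) := by
    apply mul_le_mul_of_nonneg_right _ hB.le
    linarith
  linarith

/-- Positive definiteness of a 2×2 real symmetric matrix from Sylvester's criterion. -/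
lemma posDef_fin_two {A B C : ℝ} (hA : 0 < A) (hdet : 0 < A * C - B ^ 2) :
    Matrix.PosDef !![A, B; B, C] := by
  rw [Matrix.posDef_iff_dotProduct_mulVec]
  constructor
  · ext i j
    fin_cases i <;> fin_cases j <;>
      simp [Matrix.conjTranspose_apply]
  · intro x hx
    have hx' : x 0 ≠ 0 ∨ x 1 ≠ 0 := by
      by_contra h
      push_neg at h
      exact hx (funext fun i => by fin_cases i <;> simp [h.1, h.2])
    have hexp : dotProduct (star x) (Matrix.mulVec !![A, B; B, C] x)
        = A * x 0 ^ 2 + 2 * B * x 0 * x 1 + C * x 1 ^ 2 := by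
      simp [Matrix.mulVec, dotProduct, Fin.sum_univ_two, Matrix.cons_val_zero,
        Matrix.cons_val_one, Matrix.head_cons, Pi.star_apply, star_trivial]
      ring
    rw [hexp]
    rcases eq_or_ne (x 1) 0 with h1 | h1
    · have h0 : x 0 ≠ 0 := by
        rcases hx' with h | h
        · exact h
        · exact absurd h1 h
      rw [h1]
      nlinarith [mul_pos hA (sq_pos_of_ne_zero h0)]
    · nlinarith [sq_nonneg (A * x 0 + B * x 1), mul_pos hdet (sq_pos_of_ne_zero h1),
        mul_pos hA hA, hA]

end IWLAux

/-- The Fisher information matrix of the IWL(φ,λ) model with sample size `n`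
is positive definite; in particular its determinant is positive. -/
theorem iwl_fisher_posdef (φ lam : ℝ) (hφ : 0 < φ) (hlam : 0 < lam)
    (n : ℕ) (hn : 1 ≤ n) :
    (Matrix.PosDef
        !![(n : ℝ) * trigamma φ - (n : ℝ) / (lam + φ) ^ 2,
            (n : ℝ) / lam + (n : ℝ) / (lam + φ) ^ 2;
          (n : ℝ) / lam + (n : ℝ) / (lam + φ) ^ 2,
            (n : ℝ) * (φ + 1) / lam ^ 2 - (n : ℝ) / (lam + φ) ^ 2]) ∧
      0 < (trigamma φ - 1 / (lam + φ) ^ 2) *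
            ((φ + 1) / lam ^ 2 - 1 / (lam + φ) ^ 2) -
          (1 / lam + 1 / (lam + φ) ^ 2) ^ 2 := by
  have hT := IWLAux.trigamma_gt hφ
  have hdet := IWLAux.det_pos hφ hlam hT.le
  have hn0 : (0:ℝ) < (n:ℝ) := by exact_mod_cast Nat.lt_of_lt_of_le Nat.zero_lt_one hn
  have hlp : (0:ℝ) < lam + φ := by linarith
  refine ⟨?_, hdet⟩
  have hA : 0 < (n : ℝ) * trigamma φ - (n : ℝ) / (lam + φ) ^ 2 := by
    have h1 : 1 / (lam + φ) ^ 2 < trigamma φ := by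
      have h2 : 1 / (lam + φ) ^ 2 < 1 / φ ^ 2 := by
        apply one_div_lt_one_div_of_lt (by positivity)
        nlinarith
      have h3 : (0:ℝ) < 1 / (φ + 1) + 1 / (2 * (φ + 1) ^ 2) := by positivity
      linarith
    have := mul_lt_mul_of_pos_left h1 hn0
    rw [mul_one_div] at this
    linarith
  apply IWLAux.posDef_fin_two hA
  have hexp : ((n : ℝ) * trigamma φ - (n : ℝ) / (lam + φ) ^ 2) *
        ((n : ℝ) * (φ + 1) / lam ^ 2 - (n : ℝ) / (lam + φ) ^ 2)
      - ((n : ℝ) / lam + (n : ℝ) / (lam + φ) ^ 2) ^ 2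
      = (n:ℝ)^2 * ((trigamma φ - 1 / (lam + φ) ^ 2) *
            ((φ + 1) / lam ^ 2 - 1 / (lam + φ) ^ 2) -
          (1 / lam + 1 / (lam + φ) ^ 2) ^ 2) := by
    field_simp
  rw [hexp]
  positivity
end
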